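/- arXiv:1901.10179 — 4 statements merged into one kernel-verified Lean document; each statement's English description precedes it below -/
import Mathlib

section
/- Let n ≥ 1, v = 4n+2, m = 2n+1, and for i ∈ {0,...,2n} set a_i = i and b_i = i + m in Fin v. Let S be a Steiner triple system on {0,...,2n} together with an orientation of its blocks. Then the sum of (i) the minimal trades (a_{α0} a_{α1} a_{α2} ; b_{α0} b_{α1} b_{α2}) over all 3-element subsets {α0,α1,α2} of {0,...,2n}, and (ii) for each oriented block of S, the directed-edge trades E(i,j) over its three directed edges (i,j), is a (2,3,4n+2)-halving. -/
/-- A `T(2,3,v)` trade: `f B = 0` unless `|B| = 3`, and every pair is balanced. -/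
def isTrade (v : ℕ) (f : Finset (Fin v) → ℤ) : Prop :=
  (∀ B : Finset (Fin v), B.card ≠ 3 → f B = 0) ∧
  ∀ P : Finset (Fin v), P.card = 2 →
    ∑ B ∈ Finset.univ.filter (fun B : Finset (Fin v) => B.card = 3 ∧ P ⊆ B), f B = 0

/-- A trade is simple if every value lies in `{-1, 0, 1}`. -/
def isSimple (v : ℕ) (f : Finset (Fin v) → ℤ) : Prop :=
  ∀ B : Finset (Fin v), f B = -1 ∨ f B = 0 ∨ f B = 1

/-- The volume of a trade: the sum of its positive entries. -/
def volume (v : ℕ) (f : Finset (Fin v) → ℤ) : ℤ :=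
  ∑ B : Finset (Fin v), max (f B) 0

/-- A `(2,3,v)`-halving: a simple trade taking value `±1` on every 3-subset. -/
def isHalving (v : ℕ) (f : Finset (Fin v) → ℤ) : Prop :=
  isTrade v f ∧ isSimple v f ∧
    ∀ B : Finset (Fin v), B.card = 3 → f B = 1 ∨ f B = -1

/-- The minimal trade `(a₀ a₁ a₂ ; b₀ b₁ b₂)`: it sends each of the eight sets
`{c₀,c₁,c₂}` with `cᵢ ∈ {aᵢ, bᵢ}` to `(-1)^(#{i : cᵢ = bᵢ})` and all other sets to 0. -/
def minimalTrade (v : ℕ) (a b : Fin 3 → Fin v) : Finset (Fin v) → ℤ :=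
  fun B => ∑ s : Fin 3 → Bool,
    (-1 : ℤ) ^ (Finset.univ.filter (fun i => s i = true)).card *
      (if B = Finset.image (fun i => if s i then b i else a i) Finset.univ then 1 else 0)

/-- The directed-edge trade `E(i,j) = 1_{{aᵢ,bᵢ,aⱼ}} + 1_{{aᵢ,bᵢ,bⱼ}} - 1_{{aⱼ,bⱼ,aᵢ}} - 1_{{aⱼ,bⱼ,bᵢ}}`. -/
def edgeTrade (v : ℕ) {ι : Type*} (a b : ι → Fin v) (i j : ι) : Finset (Fin v) → ℤ :=
  fun B => (if B = {a i, b i, a j} then 1 else 0) + (if B = {a i, b i, b j} then 1 else 0)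
    - (if B = {a j, b j, a i} then 1 else 0) - (if B = {a j, b j, b i} then 1 else 0)

section aux
variable {v : ℕ}

lemma card3 {x y z : Fin v} (hxy : x ≠ y) (hxz : x ≠ z) (hyz : y ≠ z) :
    ({x, y, z} : Finset (Fin v)).card = 3 :=
  Finset.card_eq_three.mpr ⟨x, y, z, hxy, hxz, hyz, rfl⟩

lemma sum_ind (T : Finset (Fin v)) (hT : T.card = 3) (P : Finset (Fin v)) (c : ℤ) :
    ∑ B ∈ Finset.univ.filter (fun B : Finset (Fin v) => B.card = 3 ∧ P ⊆ B),
      (if B = T then c else 0) = if P ⊆ T then c else 0 := by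
  rw [Finset.sum_ite_eq']
  simp [hT]

lemma isTrade_sum {ι : Type*} (s : Finset ι) (f : ι → Finset (Fin v) → ℤ)
    (hf : ∀ i ∈ s, isTrade v (f i)) : isTrade v (fun B => ∑ i ∈ s, f i B) := by
  constructor
  · intro B hB; exact Finset.sum_eq_zero fun i hi => (hf i hi).1 B hB
  · intro P hP
    rw [Finset.sum_comm]
    exact Finset.sum_eq_zero fun i hi => (hf i hi).2 P hP

lemma isTrade_add {f g : Finset (Fin v) → ℤ} (hf : isTrade v f) (hg : isTrade v g) :
    isTrade v (fun B => f B + g B) := by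
  constructor
  · intro B hB; show f B + g B = 0; rw [hf.1 B hB, hg.1 B hB, add_zero]
  · intro P hP
    rw [Finset.sum_add_distrib, hf.2 P hP, hg.2 P hP, add_zero]

end aux

section mt
variable {v : ℕ}

lemma signflip (s : Fin 3 → Bool) (k : Fin 3) :
    (-1:ℤ)^(Finset.univ.filter (fun i => Function.update s k (!s k) i = true)).card
      = -(-1:ℤ)^(Finset.univ.filter (fun i => s i = true)).card := by
  by_cases hk : s k = true
  · have he : Finset.univ.filter (fun i => s i = true)
        = insert k (Finset.univ.filter (fun i => Function.update s k (!s k) i = true)) := by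
      ext i; by_cases hik : i = k
      · subst hik; simp [Function.update_self, hk]
      · simp [Function.update_of_ne hik, hik]
    rw [he, Finset.card_insert_of_notMem (by simp [Function.update_self, hk]), pow_succ]
    ring
  · replace hk : s k = false := by simpa using hk
    have he : Finset.univ.filter (fun i => Function.update s k (!s k) i = true)
        = insert k (Finset.univ.filter (fun i => s i = true)) := by
      ext i; by_cases hik : i = k
      · subst hik; simp [Function.update_self, hk]
      · simp [Function.update_of_ne hik, hik]
    rw [he, Finset.card_insert_of_notMem (by simp [hk]), pow_succ]
    ring

lemma minimalTrade_isTrade (a b : Fin 3 → Fin v)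
    (hinj : Function.Injective (fun p : Fin 3 × Bool => if p.2 then b p.1 else a p.1)) :
    isTrade v (minimalTrade v a b) := by
  have hch : ∀ s : Fin 3 → Bool, Function.Injective (fun i => if s i then b i else a i) := by
    intro s i j hij
    exact congrArg Prod.fst (hinj (a₁ := (i, s i)) (a₂ := (j, s j)) (by simpa using hij))
  have hcardT : ∀ s : Fin 3 → Bool,
      (Finset.image (fun i => if s i then b i else a i) Finset.univ).card = 3 := fun s => by
    rw [Finset.card_image_of_injective _ (hch s), Finset.card_univ, Fintype.card_fin]
  constructor
  · intro B hB
    refine Finset.sum_eq_zero fun s _ => ?_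
    rw [if_neg, mul_zero]
    intro hBs; exact hB (hBs ▸ hcardT s)
  · intro P hP
    obtain ⟨x, y, hxy, rfl⟩ := Finset.card_eq_two.mp hP
    unfold minimalTrade
    rw [Finset.sum_comm]
    have step : ∀ s : Fin 3 → Bool,
        ∑ B ∈ Finset.univ.filter
            (fun B : Finset (Fin v) => B.card = 3 ∧ ({x,y} : Finset (Fin v)) ⊆ B),
          (-1:ℤ) ^ (Finset.univ.filter (fun i => s i = true)).card *
            (if B = Finset.image (fun i => if s i then b i else a i) Finset.univ then 1 else 0)
        = (-1:ℤ) ^ (Finset.univ.filter (fun i => s i = true)).card *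
          (if ({x,y} : Finset (Fin v)) ⊆
              Finset.image (fun i => if s i then b i else a i) Finset.univ then 1 else 0) := by
      intro s
      rw [← Finset.mul_sum, sum_ind _ (hcardT s)]
    rw [Finset.sum_congr rfl fun s _ => step s]
    by_cases hx : ∃ p : Fin 3 × Bool, x = if p.2 then b p.1 else a p.1
    · by_cases hy : ∃ p : Fin 3 × Bool, y = if p.2 then b p.1 else a p.1
      · obtain ⟨⟨ix, sx⟩, hxp⟩ := hx
        obtain ⟨⟨iy, sy⟩, hyp⟩ := hy
        have memx : ∀ s : Fin 3 → Bool,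
            x ∈ Finset.image (fun i => if s i then b i else a i) Finset.univ ↔ s ix = sx := by
          intro s; constructor
          · intro hm
            obtain ⟨l, -, hl⟩ := Finset.mem_image.mp hm
            have hpq : ((l, s l) : Fin 3 × Bool) = (ix, sx) :=
              hinj (a₁ := (l, s l)) (a₂ := (ix, sx)) (by simp only; rw [hl, hxp])
            have h1 : l = ix := congrArg Prod.fst hpq
            have h2 : s l = sx := congrArg Prod.snd hpq
            rw [← h1]; exact h2
          · intro hs
            exact Finset.mem_image.mpr ⟨ix, Finset.mem_univ _, by rw [hs, ← hxp]⟩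
        have memy : ∀ s : Fin 3 → Bool,
            y ∈ Finset.image (fun i => if s i then b i else a i) Finset.univ ↔ s iy = sy := by
          intro s; constructor
          · intro hm
            obtain ⟨l, -, hl⟩ := Finset.mem_image.mp hm
            have hpq : ((l, s l) : Fin 3 × Bool) = (iy, sy) :=
              hinj (a₁ := (l, s l)) (a₂ := (iy, sy)) (by simp only; rw [hl, hyp])
            have h1 : l = iy := congrArg Prod.fst hpq
            have h2 : s l = sy := congrArg Prod.snd hpq
            rw [← h1]; exact h2
          · intro hs
            exact Finset.mem_image.mpr ⟨iy, Finset.mem_univ _, by rw [hs, ← hyp]⟩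
        have hsub : ∀ s : Fin 3 → Bool,
            (({x,y} : Finset (Fin v)) ⊆
              Finset.image (fun i => if s i then b i else a i) Finset.univ)
            ↔ (s ix = sx ∧ s iy = sy) := by
          intro s
          rw [Finset.insert_subset_iff, Finset.singleton_subset_iff, memx s, memy s]
        by_cases hne : ix = iy
        · refine Finset.sum_eq_zero fun s _ => ?_
          rw [if_neg, mul_zero]
          rw [hsub s]
          rintro ⟨h1, h2⟩
          apply hxy
          have hss : sx = sy := by rw [← h1, hne, h2]
          rw [hxp, hyp, ← hne, hss]
        · obtain ⟨k, hki, hkj⟩ : ∃ k : Fin 3, k ≠ ix ∧ k ≠ iy := by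
            have : ∀ i j : Fin 3, i ≠ j → ∃ k, k ≠ i ∧ k ≠ j := by decide
            exact this ix iy hne
          have einv : ∀ s : Fin 3 → Bool,
              Function.update (Function.update s k (!s k)) k
                (!(Function.update s k (!s k) k)) = s := by
            intro s
            rw [Function.update_self, Bool.not_not, Function.update_idem,
              Function.update_eq_self]
          set F : (Fin 3 → Bool) → ℤ := fun s =>
            (-1:ℤ) ^ (Finset.univ.filter (fun i => s i = true)).card *
              (if ({x,y} : Finset (Fin v)) ⊆
                  Finset.image (fun i => if s i then b i else a i) Finset.univ then 1 else 0)
            with hF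
          let e : (Fin 3 → Bool) ≃ (Fin 3 → Bool) :=
            ⟨fun s => Function.update s k (!s k), fun s => Function.update s k (!s k),
              einv, einv⟩
          have hcancel : ∀ s : Fin 3 → Bool, F s + F (e s) = 0 := by
            intro s
            have hc : (({x,y} : Finset (Fin v)) ⊆
                Finset.image (fun i => if Function.update s k (!s k) i then b i else a i)
                  Finset.univ)
                ↔ (({x,y} : Finset (Fin v)) ⊆
                  Finset.image (fun i => if s i then b i else a i) Finset.univ) := by
              rw [hsub, hsub, Function.update_of_ne hki.symm, Function.update_of_ne hkj.symm]
            show F s + F (Function.update s k (!s k)) = 0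
            rw [hF]
            simp only
            rw [signflip s k]
            rw [if_congr hc rfl rfl]
            ring
          have hdup : ∑ s : Fin 3 → Bool, F s = ∑ s : Fin 3 → Bool, F (e s) :=
            (Equiv.sum_comp e F).symm
          have h2 : (∑ s : Fin 3 → Bool, F s) + (∑ s : Fin 3 → Bool, F s) = 0 := by
            nth_rewrite 2 [hdup]
            rw [← Finset.sum_add_distrib]
            exact Finset.sum_eq_zero fun s _ => hcancel s
          linarith
      · refine Finset.sum_eq_zero fun s _ => ?_
        rw [if_neg, mul_zero]
        intro hsub
        have hyT := hsub (Finset.mem_insert_of_mem (Finset.mem_singleton_self y))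
        obtain ⟨l, -, hl⟩ := Finset.mem_image.mp hyT
        exact hy ⟨(l, s l), hl.symm⟩
    · refine Finset.sum_eq_zero fun s _ => ?_
      rw [if_neg, mul_zero]
      intro hsub
      have hxT := hsub (Finset.mem_insert_self x _)
      obtain ⟨l, -, hl⟩ := Finset.mem_image.mp hxT
      exact hx ⟨(l, s l), hl.symm⟩

end mt

section et
variable {v : ℕ} {ι : Type*}

lemma edgeTrade_zero (a b : ι → Fin v) (i j : ι)
    (h1 : a i ≠ b i) (h2 : a j ≠ b j) (h3 : a i ≠ a j) (h4 : a i ≠ b j)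
    (h5 : b i ≠ a j) (h6 : b i ≠ b j) (B : Finset (Fin v)) (hB : B.card ≠ 3) :
    edgeTrade v a b i j B = 0 := by
  unfold edgeTrade
  have n1 : B ≠ {a i, b i, a j} := fun hE => hB (by rw [hE]; exact card3 h1 h3 h5)
  have n2 : B ≠ {a i, b i, b j} := fun hE => hB (by rw [hE]; exact card3 h1 h4 h6)
  have n3 : B ≠ {a j, b j, a i} := fun hE => hB (by rw [hE]; exact card3 h2 h3.symm h4.symm)
  have n4 : B ≠ {a j, b j, b i} := fun hE => hB (by rw [hE]; exact card3 h2 h5.symm h6.symm)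
  rw [if_neg n1, if_neg n2, if_neg n3, if_neg n4]
  ring

lemma sum_edgeTrade (a b : ι → Fin v) (i j : ι)
    (h1 : a i ≠ b i) (h2 : a j ≠ b j) (h3 : a i ≠ a j) (h4 : a i ≠ b j)
    (h5 : b i ≠ a j) (h6 : b i ≠ b j) (P : Finset (Fin v)) :
    ∑ B ∈ Finset.univ.filter (fun B : Finset (Fin v) => B.card = 3 ∧ P ⊆ B),
        edgeTrade v a b i j B
      = (if P ⊆ {a i, b i, a j} then 1 else 0) + (if P ⊆ {a i, b i, b j} then 1 else 0)
        - (if P ⊆ {a j, b j, a i} then 1 else 0) - (if P ⊆ {a j, b j, b i} then 1 else 0) := by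
  unfold edgeTrade
  rw [Finset.sum_sub_distrib, Finset.sum_sub_distrib, Finset.sum_add_distrib]
  rw [sum_ind _ (card3 h1 h3 h5), sum_ind _ (card3 h1 h4 h6),
    sum_ind _ (card3 h2 h3.symm h4.symm), sum_ind _ (card3 h2 h5.symm h6.symm)]

lemma edgeBlock_isTrade (a b : ι → Fin v) (i j k : ι)
    (h12 : a i ≠ b i) (h13 : a i ≠ a j) (h14 : a i ≠ b j) (h15 : a i ≠ a k) (h16 : a i ≠ b k)
    (h23 : b i ≠ a j) (h24 : b i ≠ b j) (h25 : b i ≠ a k) (h26 : b i ≠ b k)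
    (h34 : a j ≠ b j) (h35 : a j ≠ a k) (h36 : a j ≠ b k)
    (h45 : b j ≠ a k) (h46 : b j ≠ b k) (h56 : a k ≠ b k) :
    isTrade v (fun B => edgeTrade v a b i j B + edgeTrade v a b j k B
      + edgeTrade v a b k i B) := by
  constructor
  · intro B hB
    show edgeTrade v a b i j B + edgeTrade v a b j k B + edgeTrade v a b k i B = 0
    rw [edgeTrade_zero a b i j h12 h34 h13 h14 h23 h24 B hB,
      edgeTrade_zero a b j k h34 h56 h35 h36 h45 h46 B hB,
      edgeTrade_zero a b k i h56 h12 h15.symm h25.symm h16.symm h26.symm B hB]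
    ring
  · intro P hP
    rw [Finset.sum_add_distrib, Finset.sum_add_distrib,
      sum_edgeTrade a b i j h12 h34 h13 h14 h23 h24 P,
      sum_edgeTrade a b j k h34 h56 h35 h36 h45 h46 P,
      sum_edgeTrade a b k i h56 h12 h15.symm h25.symm h16.symm h26.symm P]
    obtain ⟨x, y, hxy, rfl⟩ := Finset.card_eq_two.mp hP
    have h21 := h12.symm; have h31 := h13.symm; have h41 := h14.symm
    have h51 := h15.symm; have h61 := h16.symm; have h32 := h23.symm
    have h42 := h24.symm; have h52 := h25.symm; have h62 := h26.symm
    have h43 := h34.symm; have h53 := h35.symm; have h63 := h36.symm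
    have h54 := h45.symm; have h64 := h46.symm; have h65 := h56.symm
    simp only [Finset.insert_subset_iff, Finset.singleton_subset_iff, Finset.mem_insert,
      Finset.mem_singleton]
    by_cases hxp : x = a i ∨ x = b i ∨ x = a j ∨ x = b j ∨ x = a k ∨ x = b k
    · by_cases hyp : y = a i ∨ y = b i ∨ y = a j ∨ y = b j ∨ y = a k ∨ y = b k
      · rcases hxp with rfl|rfl|rfl|rfl|rfl|rfl <;>
          rcases hyp with rfl|rfl|rfl|rfl|rfl|rfl <;>
          first
            | exact absurd rfl hxy
            | (simp only [h12, h13, h14, h15, h16, h23, h24, h25, h26, h34, h35, h36,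
                h45, h46, h56, h21, h31, h41, h51, h61, h32, h42, h52, h62, h43, h53,
                h63, h54, h64, h65, ne_eq, not_false_eq_true, and_true, true_and,
                and_false, false_and, or_false, false_or, or_true, true_or,
                if_true, if_false, eq_self_iff_true, ite_true, ite_false,
                and_self, or_self]
               norm_num)
      · push_neg at hyp
        obtain ⟨hy1, hy2, hy3, hy4, hy5, hy6⟩ := hyp
        simp [hy1, hy2, hy3, hy4, hy5, hy6]
    · push_neg at hxp
      obtain ⟨hx1, hx2, hx3, hx4, hx5, hx6⟩ := hxp
      simp [hx1, hx2, hx3, hx4, hx5, hx6]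

end et

def bigSum (v m : ℕ) (a b : Fin m → Fin v) (S : Finset (Fin m × Fin m × Fin m))
    (B : Finset (Fin v)) : ℤ :=
  (∑ s ∈ ((Finset.univ : Finset (Fin m)).powersetCard 3).attach,
    minimalTrade v
      (fun k => a ((s.1.orderIsoOfFin (Finset.mem_powersetCard.mp s.2).2) k))
      (fun k => b ((s.1.orderIsoOfFin (Finset.mem_powersetCard.mp s.2).2) k)) B) +
  ∑ t ∈ S, (edgeTrade v a b t.1 t.2.1 B + edgeTrade v a b t.2.1 t.2.2 B +
    edgeTrade v a b t.2.2 t.1 B)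

section ev
variable {v : ℕ}

lemma minimalTrade_eval (a' b' : Fin 3 → Fin v) (x y z : Fin v)
    (hinj' : ∀ (l l' : Fin 3) (s t : Bool),
      (if s then b' l else a' l) = (if t then b' l' else a' l') → l = l' ∧ s = t)
    (lx ly lz : Fin 3) (sx sy sz : Bool)
    (hlxy : lx ≠ ly) (hlxz : lx ≠ lz) (hlyz : ly ≠ lz)
    (hx : x = if sx then b' lx else a' lx)
    (hy : y = if sy then b' ly else a' ly)
    (hz : z = if sz then b' lz else a' lz) :
    minimalTrade v a' b' {x, y, z} = 1 ∨ minimalTrade v a' b' {x, y, z} = -1 := by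
  classical
  set ch₀ : Fin 3 → Bool := fun l => if l = lx then sx else if l = ly then sy else sz with hch
  have hch₀ : ∀ l : Fin 3, (if ch₀ l then b' l else a' l)
      = if l = lx then x else if l = ly then y else z := by
    intro l
    by_cases h1 : l = lx
    · subst h1; simp [hch, hx]
    · by_cases h2 : l = ly
      · subst h2; simp [hch, h1, hy]
      · have h3 : l = lz := by
          have : ∀ u : Fin 3, u ≠ lx → u ≠ ly → u ≠ lz → False := by
            intro u hu1 hu2 hu3
            have := Finset.card_le_card (s := ({lx, ly, lz, u} : Finset (Fin 3)))
              (Finset.subset_univ _)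
            rw [Finset.card_univ, Fintype.card_fin] at this
            have h4 : ({lx, ly, lz, u} : Finset (Fin 3)).card = 4 := by
              rw [Finset.card_insert_of_notMem (by simp [hlxy, hlxz, hu1.symm]),
                Finset.card_insert_of_notMem (by simp [hlyz, hu2.symm]),
                Finset.card_insert_of_notMem (by simp [hu3.symm]),
                Finset.card_singleton]
            omega
          by_contra h3
          exact this l h1 h2 h3
        subst h3; simp [hch, h1, h2, hz]
  have himage : ({x, y, z} : Finset (Fin v))
      = Finset.image (fun l => if ch₀ l then b' l else a' l) Finset.univ := by
    apply Finset.Subset.antisymm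
    · intro u hu
      simp only [Finset.mem_insert, Finset.mem_singleton] at hu
      rcases hu with rfl | rfl | rfl
      · exact Finset.mem_image.mpr ⟨lx, Finset.mem_univ _, by rw [hch₀]; simp⟩
      · exact Finset.mem_image.mpr ⟨ly, Finset.mem_univ _, by rw [hch₀]; simp [hlxy.symm]⟩
      · exact Finset.mem_image.mpr
          ⟨lz, Finset.mem_univ _, by rw [hch₀]; simp [hlxz.symm, hlyz.symm]⟩
    · intro u hu
      obtain ⟨l, -, rfl⟩ := Finset.mem_image.mp hu
      rw [hch₀]
      split_ifs <;> simp
  have huniq : ∀ ch : Fin 3 → Bool,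
      ({x, y, z} : Finset (Fin v))
        = Finset.image (fun l => if ch l then b' l else a' l) Finset.univ → ch = ch₀ := by
    intro ch hE
    funext l
    have hm : (if ch l then b' l else a' l)
        ∈ Finset.image (fun l => if ch l then b' l else a' l) Finset.univ :=
      Finset.mem_image_of_mem _ (Finset.mem_univ l)
    rw [← hE] at hm
    simp only [Finset.mem_insert, Finset.mem_singleton] at hm
    rcases hm with h | h | h
    · obtain ⟨h1, h2⟩ := hinj' l lx (ch l) sx (h.trans hx)
      rw [hch]; show ch l = if l = lx then sx else _
      rw [if_pos h1]; exact h2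
    · obtain ⟨h1, h2⟩ := hinj' l ly (ch l) sy (h.trans hy)
      rw [hch]; show ch l = if l = lx then sx else if l = ly then sy else sz
      rw [if_neg (by rw [h1]; exact hlxy.symm), if_pos h1]; exact h2
    · obtain ⟨h1, h2⟩ := hinj' l lz (ch l) sz (h.trans hz)
      rw [hch]; show ch l = if l = lx then sx else if l = ly then sy else sz
      rw [if_neg (by rw [h1]; exact hlxz.symm), if_neg (by rw [h1]; exact hlyz.symm)]
      exact h2
  unfold minimalTrade
  rw [Finset.sum_eq_single_of_mem ch₀ (Finset.mem_univ _)
    (fun ch _ hne => by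
      rw [if_neg (fun hE => hne (huniq ch hE)), mul_zero])]
  rw [if_pos himage, mul_one]
  rcases Nat.even_or_odd ((Finset.univ.filter (fun i => ch₀ i = true)).card) with he | ho
  · left; exact he.neg_one_pow
  · right; exact ho.neg_one_pow

end ev

section cases
variable {v m : ℕ} (a b : Fin m → Fin v) (p : Fin v → Fin m) (sd : Fin v → Bool)

lemma case_distinct
    (hpa : ∀ i, p (a i) = i) (hpb : ∀ i, p (b i) = i)
    (hsa : ∀ i, sd (a i) = false) (hsb : ∀ i, sd (b i) = true)
    (hrec : ∀ x : Fin v, x = if sd x then b (p x) else a (p x))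
    (hab : ∀ i j, a i ≠ b j)
    (S : Finset (Fin m × Fin m × Fin m))
    (x y z : Fin v) (hxy : x ≠ y) (hxz : x ≠ z) (hyz : y ≠ z)
    (hij : p x ≠ p y) (hik : p x ≠ p z) (hjk : p y ≠ p z) :
    bigSum v m a b S {x, y, z} = 1 ∨ bigSum v m a b S {x, y, z} = -1 := by
  classical
  -- every full pair {a l, b l} is not inside B
  have hBne : ∀ (l : Fin m) (w : Fin v), ({x, y, z} : Finset (Fin v)) ≠ {a l, b l, w} := by
    intro l w hE
    have hal : a l ∈ ({x, y, z} : Finset (Fin v)) := by rw [hE]; simp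
    have hbl : b l ∈ ({x, y, z} : Finset (Fin v)) := by rw [hE]; simp
    simp only [Finset.mem_insert, Finset.mem_singleton] at hal hbl
    rcases hal with h | h | h <;> rcases hbl with h' | h' | h' <;>
    · have e1 := congrArg p h; have e2 := congrArg p h'
      have s1 := congrArg sd h; have s2 := congrArg sd h'
      rw [hpa] at e1; rw [hpb] at e2; rw [hsa] at s1; rw [hsb] at s2
      first
        | (rw [← s1] at s2; exact Bool.noConfusion s2)
        | exact hij (e1.symm.trans e2)
        | exact hik (e1.symm.trans e2)
        | exact hjk (e1.symm.trans e2)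
        | exact hij (e2.symm.trans e1)
        | exact hik (e2.symm.trans e1)
        | exact hjk (e2.symm.trans e1)
  have hET : ∀ l l' : Fin m, edgeTrade v a b l l' ({x, y, z} : Finset (Fin v)) = 0 := by
    intro l l'
    unfold edgeTrade
    rw [if_neg (hBne l _), if_neg (hBne l _), if_neg (hBne l' _), if_neg (hBne l' _)]
    ring
  have hs₀card : ({p x, p y, p z} : Finset (Fin m)).card = 3 := card3 hij hik hjk
  have hs₀mem : ({p x, p y, p z} : Finset (Fin m)) ∈
      (Finset.univ : Finset (Fin m)).powersetCard 3 :=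
    Finset.mem_powersetCard.mpr ⟨Finset.subset_univ _, hs₀card⟩
  unfold bigSum
  have hedge : ∑ t ∈ S, (edgeTrade v a b t.1 t.2.1 ({x, y, z} : Finset (Fin v))
      + edgeTrade v a b t.2.1 t.2.2 {x, y, z} + edgeTrade v a b t.2.2 t.1 {x, y, z}) = 0 :=
    Finset.sum_eq_zero (fun t _ => by rw [hET, hET, hET]; ring)
  rw [hedge, add_zero]
  rw [Finset.sum_eq_single_of_mem
    (⟨({p x, p y, p z} : Finset (Fin m)), hs₀mem⟩ :
      {s // s ∈ (Finset.univ : Finset (Fin m)).powersetCard 3})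
    (Finset.mem_attach _ _)
    (fun s _ hne => ?_)]
  · -- value at s₀
    set σ := Finset.orderIsoOfFin ({p x, p y, p z} : Finset (Fin m))
      (Finset.mem_powersetCard.mp
        ((⟨({p x, p y, p z} : Finset (Fin m)), hs₀mem⟩ :
          {s // s ∈ (Finset.univ : Finset (Fin m)).powersetCard 3}).2)).2 with hσ
    have hσinj : ∀ l l' : Fin 3, (σ l : Fin m) = (σ l' : Fin m) → l = l' :=
      fun l l' hh => σ.injective (Subtype.ext hh)
    have hσsurj : ∀ i ∈ ({p x, p y, p z} : Finset (Fin m)), ∃ l, (σ l : Fin m) = i :=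
      fun i hi => ⟨σ.symm ⟨i, hi⟩, by simp⟩
    obtain ⟨lx, hlx⟩ := hσsurj (p x) (by simp)
    obtain ⟨ly, hly⟩ := hσsurj (p y) (by simp)
    obtain ⟨lz, hlz⟩ := hσsurj (p z) (by simp)
    have hinj' : ∀ (l l' : Fin 3) (s t : Bool),
        (if s then b (σ l : Fin m) else a (σ l : Fin m))
          = (if t then b (σ l' : Fin m) else a (σ l' : Fin m)) → l = l' ∧ s = t := by
      intro l l' s t hh
      cases s <;> cases t <;> simp only [if_true, if_false, Bool.false_eq_true,
        Bool.true_eq_false, ite_true, ite_false] at hh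
      · exact ⟨hσinj _ _ (by rw [← hpa (σ l : Fin m), ← hpa (σ l' : Fin m), hh]), rfl⟩
      · exact absurd hh (hab _ _)
      · exact absurd hh.symm (hab _ _)
      · exact ⟨hσinj _ _ (by rw [← hpb (σ l : Fin m), ← hpb (σ l' : Fin m), hh]), rfl⟩
    exact minimalTrade_eval _ _ x y z hinj' lx ly lz (sd x) (sd y) (sd z)
      (fun hc => hij (by rw [← hlx, hc, hly]))
      (fun hc => hik (by rw [← hlx, hc, hlz]))
      (fun hc => hjk (by rw [← hly, hc, hlz]))
      (by rw [hlx]; exact hrec x) (by rw [hly]; exact hrec y) (by rw [hlz]; exact hrec z)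
  · -- other subsets vanish
    refine Finset.sum_eq_zero fun ch _ => ?_
    rw [if_neg, mul_zero]
    intro hE
    have hidx : ∀ u : Fin v, u ∈ ({x, y, z} : Finset (Fin v)) → p u ∈ s.1 := by
      intro u hu
      rw [hE] at hu
      obtain ⟨l, -, hl⟩ := Finset.mem_image.mp hu
      have hmem : ((s.1.orderIsoOfFin (Finset.mem_powersetCard.mp s.2).2) l : Fin m) ∈ s.1 :=
        ((s.1.orderIsoOfFin (Finset.mem_powersetCard.mp s.2).2) l).2
      cases hc : ch l <;> rw [hc] at hl <;> simp only [if_true, if_false,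
        Bool.false_eq_true, Bool.true_eq_false, ite_true, ite_false] at hl
      · rw [← hl, hpa]; exact hmem
      · rw [← hl, hpb]; exact hmem
    have hsub : ({p x, p y, p z} : Finset (Fin m)) ⊆ s.1 := by
      intro i hi
      simp only [Finset.mem_insert, Finset.mem_singleton] at hi
      rcases hi with rfl | rfl | rfl
      · exact hidx x (by simp)
      · exact hidx y (by simp)
      · exact hidx z (by simp)
    have hcards : s.1.card = 3 := (Finset.mem_powersetCard.mp s.2).2
    have : ({p x, p y, p z} : Finset (Fin m)) = s.1 :=
      Finset.eq_of_subset_of_card_le hsub (by rw [hcards, hs₀card])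
    exact hne (Subtype.ext this.symm)

end cases


section cases2
variable {v m : ℕ} (a b : Fin m → Fin v) (p : Fin v → Fin m) (sd : Fin v → Bool)

lemma eq3 (hpa : ∀ i, p (a i) = i) (hpb : ∀ i, p (b i) = i)
    (hab : ∀ i j, a i ≠ b j)
    (i l : Fin m) (w u : Fin v) (hw : p w ≠ i) (hu : p u ≠ l) :
    ({a i, b i, w} : Finset (Fin v)) = {a l, b l, u} ↔ i = l ∧ w = u := by
  constructor
  · intro hE
    have hai : a i ∈ ({a l, b l, u} : Finset (Fin v)) := by rw [← hE]; simp
    have hbi : b i ∈ ({a l, b l, u} : Finset (Fin v)) := by rw [← hE]; simp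
    simp only [Finset.mem_insert, Finset.mem_singleton] at hai hbi
    have hil : i = l := by
      rcases hai with h | h | h
      · rw [← hpa i, ← hpa l, h]
      · exact absurd h (hab i l)
      · rcases hbi with h' | h' | h'
        · exact absurd h'.symm (hab l i)
        · rw [← hpb i, ← hpb l, h']
        · exact absurd (h'.trans h.symm).symm (hab i i)
    subst hil
    refine ⟨rfl, ?_⟩
    have hwm : w ∈ ({a i, b i, u} : Finset (Fin v)) := by rw [← hE]; simp
    simp only [Finset.mem_insert, Finset.mem_singleton] at hwm
    rcases hwm with h | h | h
    · exact absurd (by rw [h, hpa]) hw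
    · exact absurd (by rw [h, hpb]) hw
    · exact h
  · rintro ⟨rfl, rfl⟩; rfl

lemma case_pair (hpa : ∀ i, p (a i) = i) (hpb : ∀ i, p (b i) = i)
    (hsa : ∀ i, sd (a i) = false) (hsb : ∀ i, sd (b i) = true)
    (hrec : ∀ x : Fin v, x = if sd x then b (p x) else a (p x))
    (hab : ∀ i j, a i ≠ b j)
    (S : Finset (Fin m × Fin m × Fin m))
    (hSdist : ∀ t ∈ S, t.1 ≠ t.2.1 ∧ t.1 ≠ t.2.2 ∧ t.2.1 ≠ t.2.2)
    (hSsts : ∀ x y : Fin m, x ≠ y → ∃! t, t ∈ S ∧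
      (x = t.1 ∨ x = t.2.1 ∨ x = t.2.2) ∧ (y = t.1 ∨ y = t.2.1 ∨ y = t.2.2))
    (x y z : Fin v) (hxy : x ≠ y)
    (hpxy : p x = p y) (hpxz : p x ≠ p z) :
    bigSum v m a b S {x, y, z} = 1 ∨ bigSum v m a b S {x, y, z} = -1 := by
  classical
  have hsxy : sd x ≠ sd y := by
    intro hss; apply hxy
    rw [hrec x, hrec y, hpxy, hss]
  have hx' : x = if sd x then b (p x) else a (p x) := hrec x
  have hy' : y = if sd y then b (p x) else a (p x) := by
    conv_lhs => rw [hrec y]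
    rw [← hpxy]
  have hB2 : ({x, y, z} : Finset (Fin v)) = {a (p x), b (p x), z} := by
    cases hsx : sd x
    · have hsy : sd y = true := by
        cases hsy' : sd y
        · exact absurd (hsx.trans hsy'.symm) hsxy
        · rfl
      rw [hsx] at hx'; rw [hsy] at hy'
      simp only [if_true, if_false, Bool.false_eq_true, ite_true, ite_false] at hx' hy'
      rw [← hx', ← hy']
    · have hsy : sd y = false := by
        cases hsy' : sd y
        · rfl
        · exact absurd (hsx.trans hsy'.symm) hsxy
      rw [hsx] at hx'; rw [hsy] at hy'
      simp only [if_true, if_false, Bool.false_eq_true, ite_true, ite_false] at hx' hy'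
      rw [← hx', ← hy', Finset.insert_comm]
  rw [hB2]
  unfold bigSum
  have hminsum : (∑ s ∈ ((Finset.univ : Finset (Fin m)).powersetCard 3).attach,
      minimalTrade v
        (fun k => a ((s.1.orderIsoOfFin (Finset.mem_powersetCard.mp s.2).2) k))
        (fun k => b ((s.1.orderIsoOfFin (Finset.mem_powersetCard.mp s.2).2) k))
        ({a (p x), b (p x), z} : Finset (Fin v))) = 0 := by
    refine Finset.sum_eq_zero fun s _ => Finset.sum_eq_zero fun ch _ => ?_
    rw [if_neg, mul_zero]
    intro hE
    have hmem1 : a (p x) ∈ Finset.image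
        (fun l => if ch l then b ((s.1.orderIsoOfFin (Finset.mem_powersetCard.mp s.2).2) l : Fin m)
          else a ((s.1.orderIsoOfFin (Finset.mem_powersetCard.mp s.2).2) l : Fin m))
        Finset.univ := by rw [← hE]; simp
    have hmem2 : b (p x) ∈ Finset.image
        (fun l => if ch l then b ((s.1.orderIsoOfFin (Finset.mem_powersetCard.mp s.2).2) l : Fin m)
          else a ((s.1.orderIsoOfFin (Finset.mem_powersetCard.mp s.2).2) l : Fin m))
        Finset.univ := by rw [← hE]; simp
    obtain ⟨l, -, hl⟩ := Finset.mem_image.mp hmem1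
    obtain ⟨l', -, hl'⟩ := Finset.mem_image.mp hmem2
    have hcl : ch l = false := by
      cases hcl' : ch l
      · rfl
      · rw [hcl'] at hl
        simp only [ite_true, if_true] at hl
        exact absurd hl.symm (hab _ _)
    have hcl' : ch l' = true := by
      cases hcl'' : ch l'
      · rw [hcl''] at hl'
        simp only [Bool.false_eq_true, ite_false, if_false] at hl'
        exact absurd hl' (hab _ _)
      · rfl
    rw [hcl] at hl; rw [hcl'] at hl'
    simp only [ite_true, ite_false, if_true, if_false, Bool.false_eq_true] at hl hl'
    have h1 : ((s.1.orderIsoOfFin (Finset.mem_powersetCard.mp s.2).2) l : Fin m) = p x := by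
      rw [← hpa ((s.1.orderIsoOfFin (Finset.mem_powersetCard.mp s.2).2) l : Fin m), hl, hpa]
    have h2 : ((s.1.orderIsoOfFin (Finset.mem_powersetCard.mp s.2).2) l' : Fin m) = p x := by
      rw [← hpb ((s.1.orderIsoOfFin (Finset.mem_powersetCard.mp s.2).2) l' : Fin m), hl', hpb]
    have hll : l = l' := OrderIso.injective _ (Subtype.ext (h1.trans h2.symm))
    rw [hll, hcl'] at hcl
    exact Bool.noConfusion hcl
  rw [hminsum, zero_add]
  have hpzx : p z ≠ p x := hpxz.symm
  have hEval : ∀ l l' : Fin m, l ≠ l' →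
      edgeTrade v a b l l' ({a (p x), b (p x), z} : Finset (Fin v))
        = (if l = p x ∧ l' = p z then 1 else 0)
          - (if l' = p x ∧ l = p z then 1 else 0) := by
    intro l l' hll'
    unfold edgeTrade
    have h1 := eq3 a b p hpa hpb hab (p x) l z (a l') hpzx (by rw [hpa]; exact hll'.symm)
    have h2 := eq3 a b p hpa hpb hab (p x) l z (b l') hpzx (by rw [hpb]; exact hll'.symm)
    have h3 := eq3 a b p hpa hpb hab (p x) l' z (a l) hpzx (by rw [hpa]; exact hll')
    have h4 := eq3 a b p hpa hpb hab (p x) l' z (b l) hpzx (by rw [hpb]; exact hll')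
    rw [if_congr h1 rfl rfl, if_congr h2 rfl rfl, if_congr h3 rfl rfl, if_congr h4 rfl rfl]
    have ec : ∀ (i j : Fin m) (Q : Prop), (i = j ∧ Q) ↔ (j = i ∧ Q) :=
      fun i j Q => and_congr_left' eq_comm
    cases hsz : sd z
    · have hz' : z = a (p z) := by
        conv_lhs => rw [hrec z]
        rw [hsz]; simp
      have hza : ∀ u : Fin m, z = a u ↔ u = p z := by
        intro u; constructor
        · intro hc; rw [← hpa u, ← hc]
        · intro hc; rw [hc, ← hz']
      have hzb : ∀ u : Fin m, ¬ (z = b u) := by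
        intro u hc
        have hsd := congrArg sd hc
        rw [hsz, hsb] at hsd
        exact Bool.noConfusion hsd
      simp only [hza, hzb, and_false, if_false]
      rw [if_congr (ec (p x) l _) rfl rfl, if_congr (ec (p x) l' _) rfl rfl]
      ring
    · have hz' : z = b (p z) := by
        conv_lhs => rw [hrec z]
        rw [hsz]; simp
      have hzb : ∀ u : Fin m, z = b u ↔ u = p z := by
        intro u; constructor
        · intro hc; rw [← hpb u, ← hc]
        · intro hc; rw [hc, ← hz']
      have hza : ∀ u : Fin m, ¬ (z = a u) := by
        intro u hc
        have hsd := congrArg sd hc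
        rw [hsz, hsa] at hsd
        exact Bool.noConfusion hsd
      simp only [hza, hzb, and_false, if_false]
      rw [if_congr (ec (p x) l _) rfl rfl, if_congr (ec (p x) l' _) rfl rfl]
      ring
  obtain ⟨t₀, ⟨ht₀S, hit₀, hjt₀⟩, huniq⟩ := hSsts (p x) (p z) hpxz
  rw [Finset.sum_eq_single_of_mem t₀ ht₀S (fun t htS htne => ?_)]
  · obtain ⟨d12, d13, d23⟩ := hSdist t₀ ht₀S
    rw [hEval _ _ d12, hEval _ _ d23, hEval _ _ d13.symm]
    rcases hit₀ with h1 | h1 | h1 <;> rcases hjt₀ with h2 | h2 | h2 <;>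
      first
        | exact absurd (h1.trans h2.symm) hpxz
        | (left; simp [h1, h2, d12, d13, d23, d12.symm, d13.symm, d23.symm,
            hpxz, hpxz.symm]; done)
        | (right; simp [h1, h2, d12, d13, d23, d12.symm, d13.symm, d23.symm,
            hpxz, hpxz.symm]; done)
  · obtain ⟨d12, d13, d23⟩ := hSdist t htS
    rw [hEval _ _ d12, hEval _ _ d23, hEval _ _ d13.symm]
    rw [if_neg (fun hc => htne (huniq t ⟨htS, Or.inl hc.1.symm, Or.inr (Or.inl hc.2.symm)⟩)),
      if_neg (fun hc => htne (huniq t ⟨htS, Or.inr (Or.inl hc.1.symm), Or.inl hc.2.symm⟩)),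
      if_neg (fun hc => htne (huniq t ⟨htS, Or.inr (Or.inl hc.1.symm),
        Or.inr (Or.inr hc.2.symm)⟩)),
      if_neg (fun hc => htne (huniq t ⟨htS, Or.inr (Or.inr hc.1.symm),
        Or.inr (Or.inl hc.2.symm)⟩)),
      if_neg (fun hc => htne (huniq t ⟨htS, Or.inr (Or.inr hc.1.symm), Or.inl hc.2.symm⟩)),
      if_neg (fun hc => htne (huniq t ⟨htS, Or.inl hc.1.symm, Or.inr (Or.inr hc.2.symm)⟩))]
    ring

end cases2

section key
variable {v m : ℕ}

lemma key (a b : Fin m → Fin v) (p : Fin v → Fin m) (sd : Fin v → Bool)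
    (hpa : ∀ i, p (a i) = i) (hpb : ∀ i, p (b i) = i)
    (hsa : ∀ i, sd (a i) = false) (hsb : ∀ i, sd (b i) = true)
    (hrec : ∀ x : Fin v, x = if sd x then b (p x) else a (p x))
    (hab : ∀ i j, a i ≠ b j)
    (S : Finset (Fin m × Fin m × Fin m))
    (hSdist : ∀ t ∈ S, t.1 ≠ t.2.1 ∧ t.1 ≠ t.2.2 ∧ t.2.1 ≠ t.2.2)
    (hSsts : ∀ x y : Fin m, x ≠ y → ∃! t, t ∈ S ∧
      (x = t.1 ∨ x = t.2.1 ∨ x = t.2.2) ∧ (y = t.1 ∨ y = t.2.1 ∨ y = t.2.2))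
    (B : Finset (Fin v)) (hB : B.card = 3) :
    bigSum v m a b S B = 1 ∨ bigSum v m a b S B = -1 := by
  obtain ⟨x, y, z, hxy, hxz, hyz, rfl⟩ := Finset.card_eq_three.mp hB
  by_cases h1 : p x = p y
  · by_cases h2 : p x = p z
    · exfalso
      have ex := hrec x; have ey := hrec y; have ez := hrec z
      rw [← h1] at ey; rw [← h2] at ez
      cases hbx : sd x <;> cases hby : sd y <;> cases hbz : sd z <;>
        rw [hbx] at ex <;> rw [hby] at ey <;> rw [hbz] at ez <;>
        first
          | exact hxy (ex.trans ey.symm)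
          | exact hxz (ex.trans ez.symm)
          | exact hyz (ey.trans ez.symm)
    · exact case_pair a b p sd hpa hpb hsa hsb hrec hab S hSdist hSsts x y z hxy h1 h2
  · by_cases h2 : p x = p z
    · have hset : ({x, y, z} : Finset (Fin v)) = {x, z, y} := by
        ext u; simp only [Finset.mem_insert, Finset.mem_singleton]; tauto
      rw [hset]
      exact case_pair a b p sd hpa hpb hsa hsb hrec hab S hSdist hSsts x z y hxz h2 h1
    · by_cases h3 : p y = p z
      · have hset : ({x, y, z} : Finset (Fin v)) = {y, z, x} := by
          ext u; simp only [Finset.mem_insert, Finset.mem_singleton]; tauto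
        rw [hset]
        exact case_pair a b p sd hpa hpb hsa hsb hrec hab S hSdist hSsts y z x hyz h3
          (fun hc => h1 hc.symm)
      · exact case_distinct a b p sd hpa hpb hsa hsb hrec hab S x y z hxy hxz hyz h1 h2 h3

end key

/-- For `n ≥ 1`, `v = 4n+2`, `m = 2n+1`, `aᵢ = i`, `bᵢ = i + m`, and an oriented
Steiner triple system `S` on `{0,…,2n}`, the sum of (i) the minimal trades
`(a_{α₀} a_{α₁} a_{α₂} ; b_{α₀} b_{α₁} b_{α₂})` over all 3-subsets `{α₀,α₁,α₂}` of `{0,…,2n}`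
and (ii) the directed-edge trades over the directed edges of the oriented blocks of `S`,
is a `(2,3,4n+2)`-halving. -/
theorem sts_partition_halving
    (n : ℕ) (hn : 1 ≤ n) (v m : ℕ) (hv : v = 4 * n + 2) (hm : m = 2 * n + 1)
    (a b : Fin m → Fin v)
    (ha : ∀ i : Fin m, (a i : ℕ) = (i : ℕ)) (hb : ∀ i : Fin m, (b i : ℕ) = (i : ℕ) + m)
    (S : Finset (Fin m × Fin m × Fin m))
    (hSdist : ∀ t ∈ S, t.1 ≠ t.2.1 ∧ t.1 ≠ t.2.2 ∧ t.2.1 ≠ t.2.2)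
    (hSsts : ∀ x y : Fin m, x ≠ y → ∃! t, t ∈ S ∧
      (x = t.1 ∨ x = t.2.1 ∨ x = t.2.2) ∧ (y = t.1 ∨ y = t.2.1 ∨ y = t.2.2))
    (h : Finset (Fin v) → ℤ)
    (hh : h = fun B =>
      (∑ s ∈ ((Finset.univ : Finset (Fin m)).powersetCard 3).attach,
        minimalTrade v
          (fun k => a ((s.1.orderIsoOfFin (Finset.mem_powersetCard.mp s.2).2) k))
          (fun k => b ((s.1.orderIsoOfFin (Finset.mem_powersetCard.mp s.2).2) k)) B) +
      ∑ t ∈ S, (edgeTrade v a b t.1 t.2.1 B + edgeTrade v a b t.2.1 t.2.2 B +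
        edgeTrade v a b t.2.2 t.1 B)) :
    isHalving v h := by

  have hmv : v = 2 * m := by omega
  have hm0 : 0 < m := by omega
  have hhb : h = bigSum v m a b S := hh
  clear hh
  subst hhb
  set p : Fin v → Fin m := fun x => ⟨(x : ℕ) % m, Nat.mod_lt _ hm0⟩ with hp
  set sd : Fin v → Bool := fun x => decide (m ≤ (x : ℕ)) with hsdd
  have hpa : ∀ i, p (a i) = i := by
    intro i
    apply Fin.ext
    show ((a i : ℕ)) % m = (i : ℕ)
    rw [ha i]
    exact Nat.mod_eq_of_lt i.isLt
  have hpb : ∀ i, p (b i) = i := by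
    intro i
    apply Fin.ext
    show ((b i : ℕ)) % m = (i : ℕ)
    rw [hb i, Nat.add_mod_right]
    exact Nat.mod_eq_of_lt i.isLt
  have hsa : ∀ i, sd (a i) = false := by
    intro i
    show decide (m ≤ (a i : ℕ)) = false
    rw [ha i]
    exact decide_eq_false (Nat.not_le.mpr i.isLt)
  have hsb : ∀ i, sd (b i) = true := by
    intro i
    show decide (m ≤ (b i : ℕ)) = true
    rw [hb i]
    exact decide_eq_true (Nat.le_add_left m _)
  have hrec : ∀ x : Fin v, x = if sd x then b (p x) else a (p x) := by
    intro x
    have hxlt : (x : ℕ) < 2 * m := by rw [← hmv]; exact x.isLt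
    by_cases hxm : m ≤ (x : ℕ)
    · rw [show sd x = true from decide_eq_true hxm, if_pos rfl]
      apply Fin.ext
      rw [hb (p x)]
      show (x : ℕ) = (x : ℕ) % m + m
      rw [Nat.mod_eq_sub_mod hxm, Nat.mod_eq_of_lt (by omega)]
      omega
    · rw [show sd x = false from decide_eq_false hxm, if_neg (by simp), ]
      apply Fin.ext
      rw [ha (p x)]
      show (x : ℕ) = (x : ℕ) % m
      rw [Nat.mod_eq_of_lt (Nat.lt_of_not_le hxm |> fun hlt => hlt)]
  have hab : ∀ i j, a i ≠ b j := by
    intro i j hc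
    have hval := congrArg Fin.val hc
    rw [ha, hb] at hval
    have := i.isLt
    omega
  have haa : ∀ i j : Fin m, i ≠ j → a i ≠ a j := by
    intro i j hij hc
    exact hij (by rw [← hpa i, ← hpa j, hc])
  have hbb : ∀ i j : Fin m, i ≠ j → b i ≠ b j := by
    intro i j hij hc
    exact hij (by rw [← hpb i, ← hpb j, hc])
  have htrade : isTrade v (bigSum v m a b S) := by
    have h1 : isTrade v (fun B => bigSum v m a b S B) := by
      unfold bigSum
      refine isTrade_add (isTrade_sum _ _ (fun s _ => ?_)) (isTrade_sum _ _ (fun t ht => ?_))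
      · apply minimalTrade_isTrade
        rintro ⟨l, sl⟩ ⟨l', sl'⟩ hqr
        have hord : ∀ l l' : Fin 3,
            ((s.1.orderIsoOfFin (Finset.mem_powersetCard.mp s.2).2) l : Fin m)
              = ((s.1.orderIsoOfFin (Finset.mem_powersetCard.mp s.2).2) l' : Fin m)
            → l = l' := fun l l' hc => OrderIso.injective _ (Subtype.ext hc)
        cases sl <;> cases sl' <;>
          simp only [ite_true, ite_false, if_true, if_false, Bool.false_eq_true] at hqr
        · rw [hord l l' (by have hcc := congrArg p hqr; rw [hpa, hpa] at hcc; exact hcc)]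
        · exact absurd hqr (hab _ _)
        · exact absurd hqr.symm (hab _ _)
        · rw [hord l l' (by have hcc := congrArg p hqr; rw [hpb, hpb] at hcc; exact hcc)]
      · obtain ⟨d12, d13, d23⟩ := hSdist t ht
        exact edgeBlock_isTrade a b t.1 t.2.1 t.2.2
          (hab _ _) (haa _ _ d12) (hab _ _) (haa _ _ d13) (hab _ _)
          ((hab _ _).symm) (hbb _ _ d12) ((hab _ _).symm) (hbb _ _ d13)
          (hab _ _) (haa _ _ d23) (hab _ _)
          ((hab _ _).symm) (hbb _ _ d23) (hab _ _)
    exact h1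
  have hkey : ∀ B : Finset (Fin v), B.card = 3 →
      bigSum v m a b S B = 1 ∨ bigSum v m a b S B = -1 :=
    fun B hB => key a b p sd hpa hpb hsa hsb hrec hab S hSdist hSsts B hB
  refine ⟨htrade, ?_, fun B hB => hkey B hB⟩
  intro B
  by_cases hc : B.card = 3
  · rcases hkey B hc with hE | hE
    · right; right; exact hE
    · left; exact hE
  · right; left; exact htrade.1 B hc
end

section
/- Let n ≥ 2, v = 4n+2, m = 2n+1, and for i ∈ {0,...,2n} set a_i = i and b_i = i + m in Fin v. Let S' be a Steiner triple system on {0,...,2n-2} together with an orientation of its blocks, and let M be a partition of {0,...,2n-3} into (n-1) two-element subsets, each written as an ordered pair (i,j). Then the sum of (i) the minimal trades (a_{α0} a_{α1} a_{α2} ; b_{α0} b_{α1} b_{α2}) over all 3-element subsets {α0,α1,α2} of {0,...,2n}, (ii) for each oriented block of S', the directed-edge trades E(i,j) over its three directed edges, (iii) E(2n-2, 2n-1) + E(2n-1, 2n) + E(2n, 2n-2), and (iv) for each pair (i,j) of M, E(2n-1, i) + E(i, 2n) + E(2n, j) + E(j, 2n-1), is a (2,3,4n+2)-halving. -/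
structure PairStruct (v m : ℕ) (a b : Fin m → Fin v) (pr : Fin v → Fin m) (β : Fin v → Bool) :
    Prop where
  pra : ∀ p, pr (a p) = p
  prb : ∀ p, pr (b p) = p
  βa : ∀ p, β (a p) = false
  βb : ∀ p, β (b p) = true
  recov : ∀ x, x = if β x then b (pr x) else a (pr x)

namespace PairStruct

variable {v m : ℕ} {a b : Fin m → Fin v} {pr : Fin v → Fin m} {β : Fin v → Bool}

lemma ainj (hps : PairStruct v m a b pr β) : Function.Injective a := fun p q h => by
  have := congrArg pr h; rwa [hps.pra, hps.pra] at this

lemma binj (hps : PairStruct v m a b pr β) : Function.Injective b := fun p q h => by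
  have := congrArg pr h; rwa [hps.prb, hps.prb] at this

lemma ab_ne (hps : PairStruct v m a b pr β) (p q : Fin m) : a p ≠ b q := fun h => by
  have := congrArg β h; rw [hps.βa, hps.βb] at this; exact Bool.false_ne_true this

lemma mem_pair (hps : PairStruct v m a b pr β) {x : Fin v} {p : Fin m} (hx : pr x = p) :
    x = a p ∨ x = b p := by
  have := hps.recov x
  rcases hβ : β x with _ | _ <;> rw [hβ] at this <;> simp at this
  · left; rw [this, hx]
  · right; rw [this, hx]

lemma choice_inj (hps : PairStruct v m a b pr β) {α : Fin 3 → Fin m}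
    (hα : Function.Injective α) (t : Fin 3 → Bool) :
    Function.Injective (fun l => if t l then b (α l) else a (α l)) := by
  intro l l' hll
  simp only at hll
  apply hα
  rcases ht : t l with _|_ <;> rcases ht' : t l' with _|_ <;> rw [ht, ht'] at hll <;>
    simp only [if_true, if_false, Bool.false_eq_true, Bool.true_eq_false] at hll
  · exact hps.ainj hll
  · exact absurd hll (hps.ab_ne _ _)
  · exact absurd hll.symm (hps.ab_ne _ _)
  · exact hps.binj hll

lemma pr_choice (hps : PairStruct v m a b pr β) {α : Fin 3 → Fin m} (t : Fin 3 → Bool)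
    (l : Fin 3) : pr (if t l then b (α l) else a (α l)) = α l := by
  rcases t l <;> simp [hps.pra, hps.prb]

lemma choice_image_inj (hps : PairStruct v m a b pr β) {α : Fin 3 → Fin m}
    (hα : Function.Injective α) {s t : Fin 3 → Bool}
    (h : Finset.image (fun l => if s l then b (α l) else a (α l)) Finset.univ =
         Finset.image (fun l => if t l then b (α l) else a (α l)) Finset.univ) : s = t := by
  funext l
  have hmem : (if s l then b (α l) else a (α l)) ∈
      Finset.image (fun l => if t l then b (α l) else a (α l)) Finset.univ := by
    rw [← h]; exact Finset.mem_image_of_mem _ (Finset.mem_univ l)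
  obtain ⟨l', -, hl'⟩ := Finset.mem_image.mp hmem
  have hll : l' = l := by
    have := congrArg pr hl'
    rw [hps.pr_choice, hps.pr_choice] at this
    exact hα this
  subst hll
  rcases hs : s l' with _|_ <;> rcases ht : t l' with _|_ <;> rw [hs, ht] at hl' <;>
    simp only [if_true, if_false, Bool.false_eq_true, Bool.true_eq_false] at hl'
  all_goals first
    | rfl
    | exact absurd hl' (hps.ab_ne _ _)
    | exact absurd hl'.symm (hps.ab_ne _ _)

/-- value of a minimal trade on one of its eight blocks -/
lemma MT1 (hps : PairStruct v m a b pr β) {α : Fin 3 → Fin m} (hα : Function.Injective α)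
    (t : Fin 3 → Bool) :
    minimalTrade v (fun k => a (α k)) (fun k => b (α k))
      (Finset.image (fun l => if t l then b (α l) else a (α l)) Finset.univ)
      = (-1) ^ (Finset.univ.filter (fun l => t l = true)).card := by
  unfold minimalTrade
  rw [Finset.sum_eq_single t]
  · simp
  · intro s _ hst
    have : Finset.image (fun l => if t l then b (α l) else a (α l)) Finset.univ ≠
        Finset.image (fun l => if s l then b (α l) else a (α l)) Finset.univ := by
      intro hh; exact hst (hps.choice_image_inj hα hh).symm
    simp [this]
  · intro hfalse; exact absurd (Finset.mem_univ t) hfalse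

lemma MT2 {α : Fin 3 → Fin m} {B : Finset (Fin v)}
    (hB : ∀ t : Fin 3 → Bool,
      B ≠ Finset.image (fun l => if t l then b (α l) else a (α l)) Finset.univ) :
    minimalTrade v (fun k => a (α k)) (fun k => b (α k)) B = 0 := by
  unfold minimalTrade
  apply Finset.sum_eq_zero
  intro t _
  simp [hB t]

lemma MT3 (hps : PairStruct v m a b pr β) {α : Fin 3 → Fin m} (hα : Function.Injective α)
    {B : Finset (Fin v)} (h3 : B.card = 3)
    (him : B.image pr = Finset.image α Finset.univ) :
    B = Finset.image (fun l => if b (α l) ∈ B then b (α l) else a (α l)) Finset.univ := by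
  have hsub : Finset.image (fun l => if b (α l) ∈ B then b (α l) else a (α l)) Finset.univ ⊆ B := by
    intro x hx
    obtain ⟨l, -, hl⟩ := Finset.mem_image.mp hx
    by_cases hbl : b (α l) ∈ B
    · rw [if_pos hbl] at hl; rwa [← hl]
    · rw [if_neg hbl] at hl
      have : α l ∈ B.image pr := by
        rw [him]; exact Finset.mem_image_of_mem _ (Finset.mem_univ l)
      obtain ⟨y, hy, hpy⟩ := Finset.mem_image.mp this
      rcases hps.mem_pair hpy with h1 | h1
      · rw [← hl, ← h1]; exact hy
      · exact absurd (h1 ▸ hy) hbl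
  have hcard : (Finset.image (fun l => if b (α l) ∈ B then b (α l) else a (α l))
      Finset.univ).card = 3 := by
    have hi : Function.Injective (fun l => if b (α l) ∈ B then b (α l) else a (α l)) := by
      have := hps.choice_inj hα (fun l => decide (b (α l) ∈ B))
      simpa using this
    rw [Finset.card_image_of_injective _ hi]
    simp
  exact (Finset.eq_of_subset_of_card_le hsub (by rw [h3, hcard])).symm

lemma MTcount (hps : PairStruct v m a b pr β) {α : Fin 3 → Fin m} (hα : Function.Injective α)
    {B : Finset (Fin v)} (him : B.image pr = Finset.image α Finset.univ) :
    (Finset.univ.filter (fun l => decide (b (α l) ∈ B) = true)).card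
      = (B.filter (fun x => β x = true)).card := by
  apply Finset.card_bij (fun l _ => b (α l))
  · intro l hl
    simp only [Finset.mem_filter, decide_eq_true_eq] at hl
    simp only [Finset.mem_filter]
    exact ⟨hl.2, hps.βb _⟩
  · intro l hl l' hl' hh
    exact hα (hps.binj hh)
  · intro x hx
    simp only [Finset.mem_filter] at hx
    obtain ⟨hxB, hβx⟩ := hx
    have hx2 : x = b (pr x) := by
      have := hps.recov x; rwa [hβx, if_pos rfl] at this
    have : pr x ∈ Finset.image α Finset.univ := by
      rw [← him]; exact Finset.mem_image_of_mem _ hxB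
    obtain ⟨l, -, hl⟩ := Finset.mem_image.mp this
    refine ⟨l, ?_, ?_⟩
    · simp only [Finset.mem_filter, Finset.mem_univ, true_and, decide_eq_true_eq]
      rw [hl, ← hx2]; exact hxB
    · rw [hl, ← hx2]

lemma MT_eval_transversal (hps : PairStruct v m a b pr β) {α : Fin 3 → Fin m}
    (hα : Function.Injective α) {B : Finset (Fin v)} (h3 : B.card = 3)
    (him : B.image pr = Finset.image α Finset.univ) :
    minimalTrade v (fun k => a (α k)) (fun k => b (α k)) B
      = (-1) ^ (B.filter (fun x => β x = true)).card := by
  have hB := hps.MT3 hα h3 him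
  have hB' : B = Finset.image
      (fun l => if (fun l => decide (b (α l) ∈ B)) l then b (α l) else a (α l))
      Finset.univ := by simpa using hB
  rw [← hps.MTcount hα him]
  calc minimalTrade v (fun k => a (α k)) (fun k => b (α k)) B
      = minimalTrade v (fun k => a (α k)) (fun k => b (α k)) (Finset.image
        (fun l => if (fun l => decide (b (α l) ∈ B)) l then b (α l) else a (α l))
        Finset.univ) := by rw [← hB']
    _ = _ := hps.MT1 hα _

lemma MT_zero_pair (hps : PairStruct v m a b pr β) {α : Fin 3 → Fin m}
    (hα : Function.Injective α) {B : Finset (Fin v)} {x y : Fin v}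
    (hx : x ∈ B) (hy : y ∈ B) (hxy : x ≠ y) (hpxy : pr x = pr y) :
    minimalTrade v (fun k => a (α k)) (fun k => b (α k)) B = 0 := by
  apply MT2
  intro t hBt
  rw [hBt] at hx hy
  obtain ⟨l, -, hl⟩ := Finset.mem_image.mp hx
  obtain ⟨l', -, hl'⟩ := Finset.mem_image.mp hy
  rw [← hl, ← hl', hps.pr_choice, hps.pr_choice] at hpxy
  have : l = l' := hα hpxy
  rw [← hl, ← hl', this] at hxy
  exact hxy rfl

lemma MT_zero_offsupp (hps : PairStruct v m a b pr β) {α : Fin 3 → Fin m}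
    {B : Finset (Fin v)} (him : B.image pr ≠ Finset.image α Finset.univ) :
    minimalTrade v (fun k => a (α k)) (fun k => b (α k)) B = 0 := by
  apply MT2
  intro t hBt
  apply him
  rw [hBt, Finset.image_image]
  exact Finset.image_congr (fun l _ => hps.pr_choice t l)

lemma MT_zero_card (hps : PairStruct v m a b pr β) {α : Fin 3 → Fin m}
    (hα : Function.Injective α) {B : Finset (Fin v)} (h3 : B.card ≠ 3) :
    minimalTrade v (fun k => a (α k)) (fun k => b (α k)) B = 0 := by
  apply MT2
  intro t hBt
  apply h3
  rw [hBt, Finset.card_image_of_injective _ (hps.choice_inj hα t)]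
  simp

lemma card3 {x y z : Fin v} (hxy : x ≠ y) (hxz : x ≠ z) (hyz : y ≠ z) :
    ({x, y, z} : Finset (Fin v)).card = 3 := by
  rw [Finset.card_insert_of_notMem (by simp [hxy, hxz]),
    Finset.card_insert_of_notMem (by simp [hyz]), Finset.card_singleton]

lemma triple_eq (hps : PairStruct v m a b pr β) {i u w : Fin m} {x y : Fin v}
    (hxi : pr x ≠ i) (hyw : pr y = w) (huw : u ≠ w) :
    ({a i, b i, x} : Finset (Fin v)) = {a u, b u, y} ↔ u = i ∧ x = y := by
  constructor
  · intro hset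
    have hbi : b i ∈ ({a u, b u, y} : Finset (Fin v)) := by
      rw [← hset]; simp
    simp only [Finset.mem_insert, Finset.mem_singleton] at hbi
    have hui : u = i := by
      rcases hbi with h1 | h1 | h1
      · exact absurd h1.symm (hps.ab_ne _ _)
      · exact (hps.binj h1.symm)
      · exfalso
        have hwi : w = i := by rw [← hyw, ← h1, hps.prb]
        have hai : a i ∈ ({a u, b u, y} : Finset (Fin v)) := by rw [← hset]; simp
        simp only [Finset.mem_insert, Finset.mem_singleton] at hai
        rcases hai with h2 | h2 | h2
        · exact huw ((hps.ainj h2).symm.trans hwi.symm)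
        · exact hps.ab_ne _ _ h2
        · rw [← h1] at h2; exact hps.ab_ne _ _ h2
    subst hui
    refine ⟨rfl, ?_⟩
    have hx : x ∈ ({a u, b u, y} : Finset (Fin v)) := by rw [← hset]; simp
    simp only [Finset.mem_insert, Finset.mem_singleton] at hx
    rcases hx with h1 | h1 | h1
    · exact absurd (by rw [h1, hps.pra]) hxi
    · exact absurd (by rw [h1, hps.prb]) hxi
    · exact h1
  · rintro ⟨rfl, rfl⟩; rfl

lemma ET_pairblock (hps : PairStruct v m a b pr β) {i u w : Fin m} {x : Fin v}
    (hxi : pr x ≠ i) (huw : u ≠ w) :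
    edgeTrade v a b u w {a i, b i, x} =
      (if u = i ∧ pr x = w then 1 else 0) - (if w = i ∧ pr x = u then 1 else 0) := by
  unfold edgeTrade
  rw [if_congr (hps.triple_eq hxi (hps.pra w) huw) rfl rfl,
    if_congr (hps.triple_eq hxi (hps.prb w) huw) rfl rfl,
    if_congr (hps.triple_eq hxi (hps.pra u) huw.symm) rfl rfl,
    if_congr (hps.triple_eq hxi (hps.prb u) huw.symm) rfl rfl]
  by_cases hui : u = i
  · have hwi : ¬ (w = i) := fun hww => huw (hww ▸ hui ▸ rfl)
    simp only [hui, hwi, true_and, false_and, if_false, sub_zero, add_sub_cancel_right]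
    by_cases hpx : pr x = w
    · rcases hps.mem_pair hpx with h1 | h1
      · rw [if_pos h1, if_neg, if_pos hpx]
        · ring
        · rw [h1]; exact hps.ab_ne _ _
      · rw [if_pos h1, if_neg, if_pos hpx]
        · ring
        · rw [h1]; intro hh; exact hps.ab_ne _ _ hh.symm
    · rw [if_neg, if_neg, if_neg hpx]
      · ring
      · intro hh; exact hpx (by rw [hh, hps.prb])
      · intro hh; exact hpx (by rw [hh, hps.pra])
  · simp only [hui, false_and, if_false, zero_add, zero_sub]
    by_cases hwi : w = i
    · simp only [hwi, true_and]
      by_cases hpx : pr x = u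
      · rcases hps.mem_pair hpx with h1 | h1
        · rw [if_pos h1, if_neg, if_pos hpx]
          · ring
          · rw [h1]; exact hps.ab_ne _ _
        · rw [if_pos h1, if_neg, if_pos hpx]
          · ring
          · rw [h1]; intro hh; exact hps.ab_ne _ _ hh.symm
      · rw [if_neg, if_neg, if_neg hpx]
        · ring
        · intro hh; exact hpx (by rw [hh, hps.prb])
        · intro hh; exact hpx (by rw [hh, hps.pra])
    · simp [hwi]

lemma ET_zero_card (hps : PairStruct v m a b pr β) {u w : Fin m} (huw : u ≠ w)
    {B : Finset (Fin v)} (h3 : B.card ≠ 3) : edgeTrade v a b u w B = 0 := by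
  unfold edgeTrade
  have k1 : B ≠ {a u, b u, a w} := fun hh => h3 (by
    rw [hh]; exact card3 (hps.ab_ne _ _) (fun h => huw (hps.ainj h))
      (fun h => hps.ab_ne _ _ h.symm))
  have k2 : B ≠ {a u, b u, b w} := fun hh => h3 (by
    rw [hh]; exact card3 (hps.ab_ne _ _) (hps.ab_ne _ _)
      (fun h => huw (hps.binj h)))
  have k3 : B ≠ {a w, b w, a u} := fun hh => h3 (by
    rw [hh]; exact card3 (hps.ab_ne _ _) (fun h => huw (hps.ainj h).symm)
      (fun h => hps.ab_ne _ _ h.symm))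
  have k4 : B ≠ {a w, b w, b u} := fun hh => h3 (by
    rw [hh]; exact card3 (hps.ab_ne _ _) (hps.ab_ne _ _)
      (fun h => huw (hps.binj h).symm))
  simp [k1, k2, k3, k4]

lemma ET_zero_transversal (hps : PairStruct v m a b pr β) {u w : Fin m}
    {B : Finset (Fin v)} (hinj : Set.InjOn pr B) : edgeTrade v a b u w B = 0 := by
  have key : ∀ (p : Fin m) (y : Fin v), B ≠ {a p, b p, y} := by
    intro p y hh
    have h1 : a p ∈ B := by rw [hh]; simp
    have h2 : b p ∈ B := by rw [hh]; simp
    exact hps.ab_ne p p (hinj h1 h2 (by rw [hps.pra, hps.prb]))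
  unfold edgeTrade
  simp [key]

end PairStruct

/-! ### directed edge indicators -/

def dlt {X : Type*} [DecidableEq X] (u w i j : X) : ℤ :=
  (if u = i ∧ w = j then 1 else 0) - (if w = i ∧ u = j then 1 else 0)

namespace dlt

variable {X : Type*} [DecidableEq X] {u w i j : X}

lemma pos (hij : i ≠ j) : dlt i j i j = 1 := by simp [dlt, hij.symm]

lemma neg (hij : i ≠ j) : dlt j i i j = -1 := by simp [dlt, hij.symm]

lemma zero_left (h : u ≠ i) (h' : u ≠ j) : dlt u w i j = 0 := by simp [dlt, h, h']

lemma zero_right (h : w ≠ i) (h' : w ≠ j) : dlt u w i j = 0 := by simp [dlt, h, h']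

lemma zero_noti (h : u ≠ i) (h' : w ≠ i) : dlt u w i j = 0 := by simp [dlt, h, h']

lemma zero_notj (h : u ≠ j) (h' : w ≠ j) : dlt u w i j = 0 := by simp [dlt, h, h']

lemma antisymm (u w i j : X) : dlt u w j i = - dlt u w i j := by
  simp only [dlt, and_comm]
  ring

lemma row_sum [Fintype X] (u w i : X) :
    ∑ j : X, dlt u w i j = (if u = i then 1 else 0) - (if w = i then 1 else 0) := by
  unfold dlt
  rw [Finset.sum_sub_distrib]
  congr 1
  · by_cases hu : u = i
    · simp only [hu, true_and]
      rw [Finset.sum_ite_eq Finset.univ w (fun _ => (1:ℤ))]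
      simp
    · simp [hu]
  · by_cases hw : w = i
    · simp only [hw, true_and]
      rw [Finset.sum_ite_eq Finset.univ u (fun _ => (1:ℤ))]
      simp
    · simp [hw]

lemma tri_pm {t1 t2 t3 : X} (h12 : t1 ≠ t2) (h13 : t1 ≠ t3) (h23 : t2 ≠ t3) (hij : i ≠ j)
    (hi : i = t1 ∨ i = t2 ∨ i = t3) (hj : j = t1 ∨ j = t2 ∨ j = t3) :
    dlt t1 t2 i j + dlt t2 t3 i j + dlt t3 t1 i j = 1 ∨
    dlt t1 t2 i j + dlt t2 t3 i j + dlt t3 t1 i j = -1 := by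
  rcases hi with rfl | rfl | rfl <;> rcases hj with rfl | rfl | rfl <;>
    first
      | exact absurd rfl hij
      | (left;
         simp [dlt, h12, h13, h23, h12.symm, h13.symm, h23.symm, hij, hij.symm]; done)
      | (right;
         simp [dlt, h12, h13, h23, h12.symm, h13.symm, h23.symm, hij, hij.symm]; done)

lemma tri_zero_i {t1 t2 t3 : X} (h1 : i ≠ t1) (h2 : i ≠ t2) (h3 : i ≠ t3) :
    dlt t1 t2 i j + dlt t2 t3 i j + dlt t3 t1 i j = 0 := by
  rw [zero_noti h1.symm h2.symm, zero_noti h2.symm h3.symm, zero_noti h3.symm h1.symm]; ring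

lemma tri_zero_j {t1 t2 t3 : X} (h1 : j ≠ t1) (h2 : j ≠ t2) (h3 : j ≠ t3) :
    dlt t1 t2 i j + dlt t2 t3 i j + dlt t3 t1 i j = 0 := by
  rw [zero_notj h1.symm h2.symm, zero_notj h2.symm h3.symm, zero_notj h3.symm h1.symm]; ring

lemma quad_pm {d e p1 p2 : X} (hde : d ≠ e) (hdp1 : d ≠ p1) (hdp2 : d ≠ p2)
    (hep1 : e ≠ p1) (hep2 : e ≠ p2) (hp12 : p1 ≠ p2) (hij : i ≠ j)
    (hi : i = p1 ∨ i = p2) (hj : j = d ∨ j = e) :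
    dlt d p1 i j + dlt p1 e i j + dlt e p2 i j + dlt p2 d i j = 1 ∨
    dlt d p1 i j + dlt p1 e i j + dlt e p2 i j + dlt p2 d i j = -1 := by
  rcases hi with rfl | rfl <;> rcases hj with rfl | rfl <;>
    first
      | (left;
         simp [dlt, hde, hdp1, hdp2, hep1, hep2, hp12, hde.symm, hdp1.symm, hdp2.symm,
           hep1.symm, hep2.symm, hp12.symm]; done)
      | (right;
         simp [dlt, hde, hdp1, hdp2, hep1, hep2, hp12, hde.symm, hdp1.symm, hdp2.symm,
           hep1.symm, hep2.symm, hp12.symm]; done)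

lemma quad_zero {d e p1 p2 : X} (h1i : p1 ≠ i) (h1j : p1 ≠ j) (h2i : p2 ≠ i) (h2j : p2 ≠ j) :
    dlt d p1 i j + dlt p1 e i j + dlt e p2 i j + dlt p2 d i j = 0 := by
  rw [zero_right h1i h1j, zero_left h1i h1j, zero_right h2i h2j, zero_left h2i h2j]; ring

end dlt

/-! ### the tournament function ε -/

def epsFun {m : ℕ} (S : Finset (Fin m × Fin m × Fin m)) (M : Finset (Fin m × Fin m))
    (c d e : Fin m) (i j : Fin m) : ℤ :=
  (∑ t ∈ S, (dlt t.1 t.2.1 i j + dlt t.2.1 t.2.2 i j + dlt t.2.2 t.1 i j)) +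
  (dlt c d i j + dlt d e i j + dlt e c i j) +
  ∑ p ∈ M, (dlt d p.1 i j + dlt p.1 e i j + dlt e p.2 i j + dlt p.2 d i j)

lemma epsFun_antisymm {m : ℕ} (S : Finset (Fin m × Fin m × Fin m))
    (M : Finset (Fin m × Fin m)) (c d e : Fin m) (i j : Fin m) :
    epsFun S M c d e j i = - epsFun S M c d e i j := by
  unfold epsFun
  have k : ∀ u w : Fin m, dlt u w j i = - dlt u w i j := fun u w => dlt.antisymm u w i j
  have h1 : ∑ t ∈ S, (dlt t.1 t.2.1 j i + dlt t.2.1 t.2.2 j i + dlt t.2.2 t.1 j i)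
      = - ∑ t ∈ S, (dlt t.1 t.2.1 i j + dlt t.2.1 t.2.2 i j + dlt t.2.2 t.1 i j) := by
    rw [← Finset.sum_neg_distrib]
    exact Finset.sum_congr rfl fun t _ => by rw [k, k, k]; ring
  have h3 : ∑ p ∈ M, (dlt d p.1 j i + dlt p.1 e j i + dlt e p.2 j i + dlt p.2 d j i)
      = - ∑ p ∈ M, (dlt d p.1 i j + dlt p.1 e i j + dlt e p.2 i j + dlt p.2 d i j) := by
    rw [← Finset.sum_neg_distrib]
    exact Finset.sum_congr rfl fun p _ => by rw [k, k, k, k]; ring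
  rw [h1, h3, k, k, k]
  ring

lemma epsFun_rowsum {m : ℕ} (S : Finset (Fin m × Fin m × Fin m))
    (M : Finset (Fin m × Fin m)) (c d e : Fin m) (i : Fin m) :
    ∑ j : Fin m, epsFun S M c d e i j = 0 := by
  unfold epsFun
  rw [Finset.sum_add_distrib, Finset.sum_add_distrib]
  have h1 : ∑ j : Fin m, ∑ t ∈ S,
      (dlt t.1 t.2.1 i j + dlt t.2.1 t.2.2 i j + dlt t.2.2 t.1 i j) = 0 := by
    rw [Finset.sum_comm]
    apply Finset.sum_eq_zero
    intro t _
    rw [Finset.sum_add_distrib, Finset.sum_add_distrib, dlt.row_sum, dlt.row_sum, dlt.row_sum]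
    ring
  have h2 : ∑ j : Fin m, (dlt c d i j + dlt d e i j + dlt e c i j) = 0 := by
    rw [Finset.sum_add_distrib, Finset.sum_add_distrib, dlt.row_sum, dlt.row_sum, dlt.row_sum]
    ring
  have h3 : ∑ j : Fin m, ∑ p ∈ M,
      (dlt d p.1 i j + dlt p.1 e i j + dlt e p.2 i j + dlt p.2 d i j) = 0 := by
    rw [Finset.sum_comm]
    apply Finset.sum_eq_zero
    intro p _
    rw [Finset.sum_add_distrib, Finset.sum_add_distrib, Finset.sum_add_distrib,
      dlt.row_sum, dlt.row_sum, dlt.row_sum, dlt.row_sum]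
    ring
  rw [h1, h2, h3]
  ring

section EpsPM

variable {n m : ℕ} {S : Finset (Fin m × Fin m × Fin m)} {M : Finset (Fin m × Fin m)}
  {c d e : Fin m} {i j : Fin m}

lemma fin_ne_of_val_ne {x y : Fin m} (h : (x:ℕ) ≠ (y:ℕ)) : x ≠ y := fun hh => h (by rw [hh])

lemma eps_case_sts (hm : m = 2*n+1)
    (hSdist : ∀ t ∈ S, t.1 ≠ t.2.1 ∧ t.1 ≠ t.2.2 ∧ t.2.1 ≠ t.2.2)
    (hSsts : ∀ x y : Fin m, (x : ℕ) < 2 * n - 1 → (y : ℕ) < 2 * n - 1 → x ≠ y → ∃! t, t ∈ S ∧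
      (x = t.1 ∨ x = t.2.1 ∨ x = t.2.2) ∧ (y = t.1 ∨ y = t.2.1 ∨ y = t.2.2))
    (hd : (d:ℕ) = 2*n-1) (he : (e:ℕ) = 2*n)
    (hij : i ≠ j) (hi : (i:ℕ) < 2*n-1) (hj : (j:ℕ) < 2*n-1) :
    epsFun S M c d e i j = 1 ∨ epsFun S M c d e i j = -1 := by
  have hdi : d ≠ i := fin_ne_of_val_ne (by omega)
  have hdj : d ≠ j := fin_ne_of_val_ne (by omega)
  have hei : e ≠ i := fin_ne_of_val_ne (by omega)
  have hej : e ≠ j := fin_ne_of_val_ne (by omega)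
  have htri : dlt c d i j + dlt d e i j + dlt e c i j = 0 := by
    rw [dlt.zero_right hdi hdj, dlt.zero_left hdi hdj, dlt.zero_left hei hej]; ring
  have hM : ∑ p ∈ M, (dlt d p.1 i j + dlt p.1 e i j + dlt e p.2 i j + dlt p.2 d i j) = 0 :=
    Finset.sum_eq_zero fun p _ => by
      rw [dlt.zero_left hdi hdj, dlt.zero_right hei hej, dlt.zero_left hei hej,
        dlt.zero_right hdi hdj]; ring
  obtain ⟨t₀, ⟨ht₀S, hit₀, hjt₀⟩, huniq⟩ := hSsts i j hi hj hij
  have hSsum : ∑ t ∈ S, (dlt t.1 t.2.1 i j + dlt t.2.1 t.2.2 i j + dlt t.2.2 t.1 i j)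
      = dlt t₀.1 t₀.2.1 i j + dlt t₀.2.1 t₀.2.2 i j + dlt t₀.2.2 t₀.1 i j := by
    apply Finset.sum_eq_single_of_mem t₀ ht₀S
    intro t htS htne
    by_cases hit : i = t.1 ∨ i = t.2.1 ∨ i = t.2.2
    · by_cases hjt : j = t.1 ∨ j = t.2.1 ∨ j = t.2.2
      · exact absurd (huniq t ⟨htS, hit, hjt⟩) htne
      · push_neg at hjt
        exact dlt.tri_zero_j hjt.1 hjt.2.1 hjt.2.2
    · push_neg at hit
      exact dlt.tri_zero_i hit.1 hit.2.1 hit.2.2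
  obtain ⟨hd1, hd2, hd3⟩ := hSdist t₀ ht₀S
  unfold epsFun
  rw [hSsum, htri, hM, add_zero, add_zero]
  exact dlt.tri_pm hd1 hd2 hd3 hij hit₀ hjt₀

lemma eps_case_match (hm : m = 2*n+1)
    (hSsub : ∀ t ∈ S, (t.1 : ℕ) < 2 * n - 1 ∧ (t.2.1 : ℕ) < 2 * n - 1 ∧ (t.2.2 : ℕ) < 2 * n - 1)
    (hMdist : ∀ p ∈ M, p.1 ≠ p.2 ∧ (p.1 : ℕ) < 2 * n - 2 ∧ (p.2 : ℕ) < 2 * n - 2)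
    (hMcover : ∀ x : Fin m, (x : ℕ) < 2 * n - 2 → ∃! p, p ∈ M ∧ (x = p.1 ∨ x = p.2))
    (hc : (c:ℕ) = 2*n-2) (hd : (d:ℕ) = 2*n-1) (he : (e:ℕ) = 2*n)
    (hij : i ≠ j) (hi : (i:ℕ) < 2*n-2) (hj : j = d ∨ j = e) :
    epsFun S M c d e i j = 1 ∨ epsFun S M c d e i j = -1 := by
  have hjval : (j:ℕ) = 2*n-1 ∨ (j:ℕ) = 2*n := by
    rcases hj with rfl | rfl
    · left; exact hd
    · right; exact he
  have hci : c ≠ i := fin_ne_of_val_ne (by omega)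
  have hdi : d ≠ i := fin_ne_of_val_ne (by omega)
  have hei : e ≠ i := fin_ne_of_val_ne (by omega)
  have hS : ∑ t ∈ S, (dlt t.1 t.2.1 i j + dlt t.2.1 t.2.2 i j + dlt t.2.2 t.1 i j) = 0 :=
    Finset.sum_eq_zero fun t htS => by
      obtain ⟨k1, k2, k3⟩ := hSsub t htS
      exact dlt.tri_zero_j (fin_ne_of_val_ne (by omega)) (fin_ne_of_val_ne (by omega))
        (fin_ne_of_val_ne (by omega))
  have htri : dlt c d i j + dlt d e i j + dlt e c i j = 0 := by
    rw [dlt.zero_noti hci hdi, dlt.zero_noti hdi hei, dlt.zero_noti hei hci]; ring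
  obtain ⟨p₀, ⟨hp₀M, hip₀⟩, huniq⟩ := hMcover i hi
  obtain ⟨hq1, hq2, hq3⟩ := hMdist p₀ hp₀M
  have hMsum : ∑ p ∈ M, (dlt d p.1 i j + dlt p.1 e i j + dlt e p.2 i j + dlt p.2 d i j)
      = dlt d p₀.1 i j + dlt p₀.1 e i j + dlt e p₀.2 i j + dlt p₀.2 d i j := by
    apply Finset.sum_eq_single_of_mem p₀ hp₀M
    intro p hpM hpne
    obtain ⟨k1, k2, k3⟩ := hMdist p hpM
    have hp1i : p.1 ≠ i := fun hh => hpne (huniq p ⟨hpM, Or.inl hh.symm⟩)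
    have hp2i : p.2 ≠ i := fun hh => hpne (huniq p ⟨hpM, Or.inr hh.symm⟩)
    exact dlt.quad_zero hp1i (fin_ne_of_val_ne (by omega)) hp2i (fin_ne_of_val_ne (by omega))
  unfold epsFun
  rw [hS, htri, hMsum, add_zero, zero_add]
  exact dlt.quad_pm (fin_ne_of_val_ne (by omega)) (fin_ne_of_val_ne (by omega))
    (fin_ne_of_val_ne (by omega)) (fin_ne_of_val_ne (by omega)) (fin_ne_of_val_ne (by omega))
    hq1 hij hip₀ hj

lemma eps_case_tri (hm : m = 2*n+1)
    (hSsub : ∀ t ∈ S, (t.1 : ℕ) < 2 * n - 1 ∧ (t.2.1 : ℕ) < 2 * n - 1 ∧ (t.2.2 : ℕ) < 2 * n - 1)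
    (hMdist : ∀ p ∈ M, p.1 ≠ p.2 ∧ (p.1 : ℕ) < 2 * n - 2 ∧ (p.2 : ℕ) < 2 * n - 2)
    (hn : 2 ≤ n)
    (hc : (c:ℕ) = 2*n-2) (hd : (d:ℕ) = 2*n-1) (he : (e:ℕ) = 2*n)
    (hij : i ≠ j) (hi : i = c ∨ i = d ∨ i = e) (hj : j = c ∨ j = d ∨ j = e) :
    epsFun S M c d e i j = 1 ∨ epsFun S M c d e i j = -1 := by
  have hival : 2*n-2 ≤ (i:ℕ) := by rcases hi with rfl | rfl | rfl <;> omega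
  have hjval : 2*n-2 ≤ (j:ℕ) := by rcases hj with rfl | rfl | rfl <;> omega
  have key : 2*n-1 ≤ (i:ℕ) ∨ 2*n-1 ≤ (j:ℕ) := by
    rcases hi with rfl | rfl | rfl <;> rcases hj with rfl | rfl | rfl <;>
      first | (exact absurd rfl hij) | (left; omega) | (right; omega)
  have hS : ∑ t ∈ S, (dlt t.1 t.2.1 i j + dlt t.2.1 t.2.2 i j + dlt t.2.2 t.1 i j) = 0 :=
    Finset.sum_eq_zero fun t htS => by
      obtain ⟨k1, k2, k3⟩ := hSsub t htS
      rcases key with hk | hk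
      · exact dlt.tri_zero_i (fin_ne_of_val_ne (by omega)) (fin_ne_of_val_ne (by omega))
          (fin_ne_of_val_ne (by omega))
      · exact dlt.tri_zero_j (fin_ne_of_val_ne (by omega)) (fin_ne_of_val_ne (by omega))
          (fin_ne_of_val_ne (by omega))
  have hM : ∑ p ∈ M, (dlt d p.1 i j + dlt p.1 e i j + dlt e p.2 i j + dlt p.2 d i j) = 0 :=
    Finset.sum_eq_zero fun p hpM => by
      obtain ⟨k1, k2, k3⟩ := hMdist p hpM
      exact dlt.quad_zero (fin_ne_of_val_ne (by omega)) (fin_ne_of_val_ne (by omega))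
        (fin_ne_of_val_ne (by omega)) (fin_ne_of_val_ne (by omega))
  unfold epsFun
  rw [hS, hM, add_zero, zero_add]
  exact dlt.tri_pm (fin_ne_of_val_ne (by omega)) (fin_ne_of_val_ne (by omega))
    (fin_ne_of_val_ne (by omega)) hij hi hj

lemma epsFun_pm (hn : 2 ≤ n) (hm : m = 2*n+1)
    (hSdist : ∀ t ∈ S, t.1 ≠ t.2.1 ∧ t.1 ≠ t.2.2 ∧ t.2.1 ≠ t.2.2)
    (hSsub : ∀ t ∈ S, (t.1 : ℕ) < 2 * n - 1 ∧ (t.2.1 : ℕ) < 2 * n - 1 ∧ (t.2.2 : ℕ) < 2 * n - 1)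
    (hSsts : ∀ x y : Fin m, (x : ℕ) < 2 * n - 1 → (y : ℕ) < 2 * n - 1 → x ≠ y → ∃! t, t ∈ S ∧
      (x = t.1 ∨ x = t.2.1 ∨ x = t.2.2) ∧ (y = t.1 ∨ y = t.2.1 ∨ y = t.2.2))
    (hMdist : ∀ p ∈ M, p.1 ≠ p.2 ∧ (p.1 : ℕ) < 2 * n - 2 ∧ (p.2 : ℕ) < 2 * n - 2)
    (hMcover : ∀ x : Fin m, (x : ℕ) < 2 * n - 2 → ∃! p, p ∈ M ∧ (x = p.1 ∨ x = p.2))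
    (hc : (c:ℕ) = 2*n-2) (hd : (d:ℕ) = 2*n-1) (he : (e:ℕ) = 2*n)
    (hij : i ≠ j) :
    epsFun S M c d e i j = 1 ∨ epsFun S M c d e i j = -1 := by
  have tricho : ∀ x : Fin m, (x:ℕ) < 2*n-2 ∨ x = c ∨ x = d ∨ x = e := by
    intro x
    have hx := x.isLt
    have : (x:ℕ) < 2*n-2 ∨ (x:ℕ) = 2*n-2 ∨ (x:ℕ) = 2*n-1 ∨ (x:ℕ) = 2*n := by omega
    rcases this with h | h | h | h
    · exact Or.inl h
    · exact Or.inr (Or.inl (Fin.val_injective (by omega)))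
    · exact Or.inr (Or.inr (Or.inl (Fin.val_injective (by omega))))
    · exact Or.inr (Or.inr (Or.inr (Fin.val_injective (by omega))))
  by_cases hi1 : (i:ℕ) < 2*n-1
  · by_cases hj1 : (j:ℕ) < 2*n-1
    · exact eps_case_sts hm hSdist hSsts hd he hij hi1 hj1
    · have hj2 : j = d ∨ j = e := by
        rcases tricho j with h | rfl | h | h
        · omega
        · omega
        · exact Or.inl h
        · exact Or.inr h
      rcases tricho i with h | rfl | rfl | rfl
      · exact eps_case_match hm hSsub hMdist hMcover hc hd he hij h hj2
      · exact eps_case_tri hm hSsub hMdist hn hc hd he hij (Or.inl rfl)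
          (hj2.elim (fun h => Or.inr (Or.inl h)) (fun h => Or.inr (Or.inr h)))
      · omega
      · omega
  · have hi2 : i = d ∨ i = e := by
      rcases tricho i with h | rfl | h | h
      · omega
      · omega
      · exact Or.inl h
      · exact Or.inr h
    have hanti := epsFun_antisymm S M c d e i j
    have hpm : epsFun S M c d e j i = 1 ∨ epsFun S M c d e j i = -1 := by
      rcases tricho j with h | rfl | rfl | rfl
      · exact eps_case_match hm hSsub hMdist hMcover hc hd he hij.symm h hi2
      · exact eps_case_tri hm hSsub hMdist hn hc hd he hij.symm (Or.inl rfl)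
          (hi2.elim (fun h => Or.inr (Or.inl h)) (fun h => Or.inr (Or.inr h)))
      · exact eps_case_tri hm hSsub hMdist hn hc hd he hij.symm (Or.inr (Or.inl rfl))
          (hi2.elim (fun h => Or.inr (Or.inl h)) (fun h => Or.inr (Or.inr h)))
      · exact eps_case_tri hm hSsub hMdist hn hc hd he hij.symm (Or.inr (Or.inr rfl))
          (hi2.elim (fun h => Or.inr (Or.inl h)) (fun h => Or.inr (Or.inr h)))
    rcases hpm with h | h
    · right; rw [h] at hanti; linarith
    · left; rw [h] at hanti; linarith

end EpsPM

/-! ### concrete pair structure and bridges -/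

def prFun (v m : ℕ) (hm0 : 0 < m) : Fin v → Fin m :=
  fun x => ⟨(x : ℕ) % m, Nat.mod_lt _ hm0⟩

def βFun (v m : ℕ) : Fin v → Bool := fun x => decide (m ≤ (x : ℕ))

lemma mkPairStruct {v m : ℕ} (hv : v = 2 * m) (hm0 : 0 < m) (a b : Fin m → Fin v)
    (ha : ∀ i, (a i : ℕ) = i) (hb : ∀ i, (b i : ℕ) = (i : ℕ) + m) :
    PairStruct v m a b (prFun v m hm0) (βFun v m) := by
  constructor
  · intro p
    apply Fin.val_injective
    show (a p : ℕ) % m = p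
    rw [ha p]
    exact Nat.mod_eq_of_lt p.isLt
  · intro p
    apply Fin.val_injective
    show (b p : ℕ) % m = p
    rw [hb p, Nat.add_mod_right]
    exact Nat.mod_eq_of_lt p.isLt
  · intro p
    show decide (m ≤ (a p : ℕ)) = false
    rw [decide_eq_false_iff_not, ha p]
    have := p.isLt
    omega
  · intro p
    show decide (m ≤ (b p : ℕ)) = true
    rw [decide_eq_true_eq, hb p]
    omega
  · intro x
    have hx := x.isLt
    by_cases hmx : m ≤ (x : ℕ)
    · have hβ : βFun v m x = true := by
        show decide _ = true
        rw [decide_eq_true_eq]; exact hmx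
      rw [hβ, if_pos rfl]
      apply Fin.val_injective
      rw [hb]
      show (x : ℕ) = (x : ℕ) % m + m
      have : (x : ℕ) % m = (x : ℕ) - m := by
        rw [Nat.mod_eq_sub_mod hmx]
        exact Nat.mod_eq_of_lt (by omega)
      omega
    · have hβ : βFun v m x = false := by
        show decide _ = false
        rw [decide_eq_false_iff_not]; exact hmx
      rw [hβ, if_neg (by simp)]
      apply Fin.val_injective
      rw [ha]
      show (x : ℕ) = (x : ℕ) % m
      exact (Nat.mod_eq_of_lt (by omega)).symm

lemma dlt_diag {X : Type*} [DecidableEq X] (u w i : X) : dlt u w i i = 0 := by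
  simp [dlt, and_comm]

lemma epsFun_diag {m : ℕ} (S : Finset (Fin m × Fin m × Fin m)) (M : Finset (Fin m × Fin m))
    (c d e : Fin m) (i : Fin m) : epsFun S M c d e i i = 0 := by
  unfold epsFun
  rw [Finset.sum_eq_zero (fun t _ => by rw [dlt_diag, dlt_diag, dlt_diag]; ring),
    Finset.sum_eq_zero (fun p _ => by rw [dlt_diag, dlt_diag, dlt_diag, dlt_diag]; ring),
    dlt_diag, dlt_diag, dlt_diag]
  ring

lemma ET_dlt {v m : ℕ} {a b : Fin m → Fin v} {pr : Fin v → Fin m} {β : Fin v → Bool}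
    (hps : PairStruct v m a b pr β) {i u w : Fin m} {x : Fin v}
    (hxi : pr x ≠ i) (huw : u ≠ w) :
    edgeTrade v a b u w {a i, b i, x} = dlt u w i (pr x) := by
  rw [hps.ET_pairblock hxi huw]
  unfold dlt
  simp only [show (pr x = w) ↔ (w = pr x) from eq_comm,
    show (pr x = u) ↔ (u = pr x) from eq_comm]

lemma image_orderIsoOfFin {X : Type*} [DecidableEq X] [LinearOrder X] {s : Finset X} {k : ℕ}
    (h : s.card = k) :
    Finset.image (fun l => ((s.orderIsoOfFin h) l : X)) Finset.univ = s := by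
  ext x
  simp only [Finset.mem_image, Finset.mem_univ, true_and]
  constructor
  · rintro ⟨l, rfl⟩
    exact (s.orderIsoOfFin h l).2
  · intro hx
    exact ⟨(s.orderIsoOfFin h).symm ⟨x, hx⟩, by simp⟩

/-- For `n ≥ 2`, `v = 4n+2`, `m = 2n+1`, `aᵢ = i`, `bᵢ = i + m`, an oriented
Steiner triple system `S'` on `{0,…,2n-2}` and a perfect matching `M` on `{0,…,2n-3}` into
`n-1` ordered pairs, the sum of (i) the minimal trades over all 3-subsets of `{0,…,2n}`,
(ii) the directed-edge trades of the oriented blocks of `S'`, (iii) the triangle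
`E(2n-2,2n-1) + E(2n-1,2n) + E(2n,2n-2)`, and (iv) for each pair `(i,j)` of `M` the 4-cycle
`E(2n-1,i) + E(i,2n) + E(2n,j) + E(j,2n-1)`, is a `(2,3,4n+2)`-halving. -/
theorem sts_matching_partition_halving
    (n : ℕ) (hn : 2 ≤ n) (v m : ℕ) (hv : v = 4 * n + 2) (hm : m = 2 * n + 1)
    (a b : Fin m → Fin v)
    (ha : ∀ i : Fin m, (a i : ℕ) = (i : ℕ)) (hb : ∀ i : Fin m, (b i : ℕ) = (i : ℕ) + m)
    (S : Finset (Fin m × Fin m × Fin m))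
    (hSdist : ∀ t ∈ S, t.1 ≠ t.2.1 ∧ t.1 ≠ t.2.2 ∧ t.2.1 ≠ t.2.2)
    (hSsub : ∀ t ∈ S, (t.1 : ℕ) < 2 * n - 1 ∧ (t.2.1 : ℕ) < 2 * n - 1 ∧ (t.2.2 : ℕ) < 2 * n - 1)
    (hSsts : ∀ x y : Fin m, (x : ℕ) < 2 * n - 1 → (y : ℕ) < 2 * n - 1 → x ≠ y → ∃! t, t ∈ S ∧
      (x = t.1 ∨ x = t.2.1 ∨ x = t.2.2) ∧ (y = t.1 ∨ y = t.2.1 ∨ y = t.2.2))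
    (M : Finset (Fin m × Fin m))
    (hMdist : ∀ p ∈ M, p.1 ≠ p.2 ∧ (p.1 : ℕ) < 2 * n - 2 ∧ (p.2 : ℕ) < 2 * n - 2)
    (hMcover : ∀ x : Fin m, (x : ℕ) < 2 * n - 2 → ∃! p, p ∈ M ∧ (x = p.1 ∨ x = p.2))
    (hMcard : M.card = n - 1)
    (c d e : Fin m) (hc : (c : ℕ) = 2 * n - 2) (hd : (d : ℕ) = 2 * n - 1) (he : (e : ℕ) = 2 * n)
    (h : Finset (Fin v) → ℤ)
    (hh : h = fun B =>
      (∑ s ∈ ((Finset.univ : Finset (Fin m)).powersetCard 3).attach,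
        minimalTrade v
          (fun k => a ((s.1.orderIsoOfFin (Finset.mem_powersetCard.mp s.2).2) k))
          (fun k => b ((s.1.orderIsoOfFin (Finset.mem_powersetCard.mp s.2).2) k)) B) +
      (∑ t ∈ S, (edgeTrade v a b t.1 t.2.1 B + edgeTrade v a b t.2.1 t.2.2 B +
        edgeTrade v a b t.2.2 t.1 B)) +
      (edgeTrade v a b c d B + edgeTrade v a b d e B + edgeTrade v a b e c B) +
      ∑ p ∈ M, (edgeTrade v a b d p.1 B + edgeTrade v a b p.1 e B +
        edgeTrade v a b e p.2 B + edgeTrade v a b p.2 d B)) :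
    isHalving v h := by

  have hm0 : 0 < m := by omega
  have h2m : v = 2 * m := by omega
  have hps := mkPairStruct h2m hm0 a b ha hb
  have hcd : c ≠ d := fin_ne_of_val_ne (by omega)
  have hde' : d ≠ e := fin_ne_of_val_ne (by omega)
  have hec : e ≠ c := fin_ne_of_val_ne (by omega)
  have hMne : ∀ p ∈ M, d ≠ p.1 ∧ p.1 ≠ e ∧ e ≠ p.2 ∧ p.2 ≠ d := by
    intro p hp
    obtain ⟨h1, h2, h3⟩ := hMdist p hp
    exact ⟨fin_ne_of_val_ne (by omega), fin_ne_of_val_ne (by omega),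
      fin_ne_of_val_ne (by omega), fin_ne_of_val_ne (by omega)⟩
  have hαinj : ∀ s : {x // x ∈ (Finset.univ : Finset (Fin m)).powersetCard 3},
      Function.Injective (fun k : Fin 3 =>
        ((s.1.orderIsoOfFin (Finset.mem_powersetCard.mp s.2).2) k : Fin m)) := by
    intro s k k' hkk
    exact (s.1.orderIsoOfFin _).injective (Subtype.coe_injective hkk)
  -- zero off 3-sets
  have hzero : ∀ B : Finset (Fin v), B.card ≠ 3 → h B = 0 := by
    intro B h3
    simp only [hh]
    rw [Finset.sum_eq_zero (fun s _ => hps.MT_zero_card (hαinj s) h3),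
      Finset.sum_eq_zero (fun t ht => by
        obtain ⟨k1, k2, k3⟩ := hSdist t ht
        rw [hps.ET_zero_card k1 h3, hps.ET_zero_card k3 h3,
          hps.ET_zero_card (Ne.symm k2) h3]; ring),
      Finset.sum_eq_zero (fun p hp => by
        obtain ⟨k1, k2, k3, k4⟩ := hMne p hp
        rw [hps.ET_zero_card k1 h3, hps.ET_zero_card k2 h3,
          hps.ET_zero_card k3 h3, hps.ET_zero_card k4 h3]; ring),
      hps.ET_zero_card hcd h3, hps.ET_zero_card hde' h3, hps.ET_zero_card hec h3]
    ring
  -- value on transversal 3-sets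
  have htrans : ∀ B : Finset (Fin v), B.card = 3 → Set.InjOn (prFun v m hm0) ↑B →
      h B = (-1) ^ ((B.filter (fun x => βFun v m x = true)).card) := by
    intro B h3 hinj
    simp only [hh]
    have hcard3 : (B.image (prFun v m hm0)).card = 3 := by
      rw [Finset.card_image_of_injOn hinj, h3]
    have hmem : B.image (prFun v m hm0) ∈ (Finset.univ : Finset (Fin m)).powersetCard 3 :=
      Finset.mem_powersetCard.mpr ⟨Finset.subset_univ _, hcard3⟩
    have hsum1 : (∑ s ∈ ((Finset.univ : Finset (Fin m)).powersetCard 3).attach,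
        minimalTrade v
          (fun k => a ((s.1.orderIsoOfFin (Finset.mem_powersetCard.mp s.2).2) k))
          (fun k => b ((s.1.orderIsoOfFin (Finset.mem_powersetCard.mp s.2).2) k)) B)
        = (-1) ^ ((B.filter (fun x => βFun v m x = true)).card) := by
      rw [Finset.sum_eq_single_of_mem (⟨B.image (prFun v m hm0), hmem⟩ :
        {x // x ∈ (Finset.univ : Finset (Fin m)).powersetCard 3}) (Finset.mem_attach _ _)]
      · exact hps.MT_eval_transversal (hαinj ⟨B.image (prFun v m hm0), hmem⟩) h3
          (image_orderIsoOfFin _).symm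
      · intro s _ hsne
        apply hps.MT_zero_offsupp (α := fun k =>
          ((s.1.orderIsoOfFin (Finset.mem_powersetCard.mp s.2).2) k : Fin m))
        rw [image_orderIsoOfFin]
        intro hbad
        exact hsne (Subtype.ext hbad.symm)
    rw [hsum1,
      Finset.sum_eq_zero (fun t _ => by
        rw [hps.ET_zero_transversal hinj, hps.ET_zero_transversal hinj,
          hps.ET_zero_transversal hinj]; ring),
      Finset.sum_eq_zero (fun p _ => by
        rw [hps.ET_zero_transversal hinj, hps.ET_zero_transversal hinj,
          hps.ET_zero_transversal hinj, hps.ET_zero_transversal hinj]; ring),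
      hps.ET_zero_transversal hinj, hps.ET_zero_transversal hinj,
      hps.ET_zero_transversal hinj]
    ring
  -- value on pair-containing 3-sets
  have hpairB : ∀ (i : Fin m) (x : Fin v), prFun v m hm0 x ≠ i →
      h {a i, b i, x} = epsFun S M c d e i (prFun v m hm0 x) := by
    intro i x hxi
    simp only [hh]
    have habm : a i ∈ ({a i, b i, x} : Finset (Fin v)) := by simp
    have hbbm : b i ∈ ({a i, b i, x} : Finset (Fin v)) := by simp
    have hsum1 : (∑ s ∈ ((Finset.univ : Finset (Fin m)).powersetCard 3).attach,
        minimalTrade v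
          (fun k => a ((s.1.orderIsoOfFin (Finset.mem_powersetCard.mp s.2).2) k))
          (fun k => b ((s.1.orderIsoOfFin (Finset.mem_powersetCard.mp s.2).2) k))
          {a i, b i, x}) = 0 :=
      Finset.sum_eq_zero fun s _ => hps.MT_zero_pair (hαinj s) habm hbbm
        (hps.ab_ne i i) (by rw [hps.pra, hps.prb])
    have hsum2 : (∑ t ∈ S, (edgeTrade v a b t.1 t.2.1 {a i, b i, x} +
          edgeTrade v a b t.2.1 t.2.2 {a i, b i, x} +
          edgeTrade v a b t.2.2 t.1 {a i, b i, x}))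
        = ∑ t ∈ S, (dlt t.1 t.2.1 i (prFun v m hm0 x) + dlt t.2.1 t.2.2 i (prFun v m hm0 x) +
          dlt t.2.2 t.1 i (prFun v m hm0 x)) :=
      Finset.sum_congr rfl fun t ht => by
        obtain ⟨k1, k2, k3⟩ := hSdist t ht
        rw [ET_dlt hps hxi k1, ET_dlt hps hxi k3, ET_dlt hps hxi (Ne.symm k2)]
    have hsum4 : (∑ p ∈ M, (edgeTrade v a b d p.1 {a i, b i, x} +
          edgeTrade v a b p.1 e {a i, b i, x} + edgeTrade v a b e p.2 {a i, b i, x} +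
          edgeTrade v a b p.2 d {a i, b i, x}))
        = ∑ p ∈ M, (dlt d p.1 i (prFun v m hm0 x) + dlt p.1 e i (prFun v m hm0 x) +
          dlt e p.2 i (prFun v m hm0 x) + dlt p.2 d i (prFun v m hm0 x)) :=
      Finset.sum_congr rfl fun p hp => by
        obtain ⟨k1, k2, k3, k4⟩ := hMne p hp
        rw [ET_dlt hps hxi k1, ET_dlt hps hxi k2, ET_dlt hps hxi k3, ET_dlt hps hxi k4]
    rw [hsum1, hsum2, hsum4, ET_dlt hps hxi hcd, ET_dlt hps hxi hde', ET_dlt hps hxi hec]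
    unfold epsFun
    ring
  -- decomposition of 3-sets
  have hdecomp : ∀ B : Finset (Fin v), B.card = 3 →
      Set.InjOn (prFun v m hm0) ↑B ∨
        ∃ (i : Fin m) (x : Fin v), prFun v m hm0 x ≠ i ∧ B = {a i, b i, x} := by
    intro B h3
    by_cases hinj : Set.InjOn (prFun v m hm0) ↑B
    · exact Or.inl hinj
    · right
      rw [Set.InjOn] at hinj
      push_neg at hinj
      obtain ⟨y, hy, z, hz, hpyz, hyz⟩ := hinj
      have hyB : y ∈ B := hy
      have hzB : z ∈ B := hz
      have hsub : ({y, z} : Finset (Fin v)) ⊆ B := by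
        intro w hw
        simp only [Finset.mem_insert, Finset.mem_singleton] at hw
        rcases hw with rfl | rfl
        · exact hyB
        · exact hzB
      have hsd : (B \ {y, z}).card = 1 := by
        rw [Finset.card_sdiff_of_subset hsub, h3, Finset.card_pair hyz]
      obtain ⟨x, hx1⟩ := Finset.card_eq_one.mp hsd
      have hxmem : x ∈ B \ ({y, z} : Finset (Fin v)) := by
        rw [hx1]; exact Finset.mem_singleton_self x
      rw [Finset.mem_sdiff, Finset.mem_insert, Finset.mem_singleton] at hxmem
      obtain ⟨hxB, hxyz⟩ := hxmem
      push_neg at hxyz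
      obtain ⟨hxy, hxz⟩ := hxyz
      set i := prFun v m hm0 y with hidef
      have hyp := hps.mem_pair (rfl : prFun v m hm0 y = i)
      have hzp := hps.mem_pair (show prFun v m hm0 z = i from hpyz.symm)
      have habB : a i ∈ B ∧ b i ∈ B := by
        rcases hyp with h1 | h1 <;> rcases hzp with h2 | h2
        · exact absurd (h1.symm ▸ h2.symm ▸ rfl : y = z) hyz
        · exact ⟨h1 ▸ hyB, h2 ▸ hzB⟩
        · exact ⟨h2 ▸ hzB, h1 ▸ hyB⟩
        · exact absurd (h1.symm ▸ h2.symm ▸ rfl : y = z) hyz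
      have hxi : prFun v m hm0 x ≠ i := by
        intro hxip
        rcases hps.mem_pair hxip with h1 | h1 <;> rcases hyp with h2 | h2 <;>
          rcases hzp with h3' | h3' <;> first
          | exact hxy (h1.trans h2.symm)
          | exact hxz (h1.trans h3'.symm)
          | exact hyz (h2.trans h3'.symm)
      refine ⟨i, x, hxi, ?_⟩
      have hss : ({a i, b i, x} : Finset (Fin v)) ⊆ B := by
        intro w hw
        simp only [Finset.mem_insert, Finset.mem_singleton] at hw
        rcases hw with rfl | rfl | rfl
        · exact habB.1
        · exact habB.2
        · exact hxB
      have hxa : x ≠ a i := fun hh => hxi (by rw [hh, hps.pra])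
      have hxb : x ≠ b i := fun hh => hxi (by rw [hh, hps.prb])
      have hc3 : ({a i, b i, x} : Finset (Fin v)).card = 3 :=
        PairStruct.card3 (hps.ab_ne i i) (Ne.symm hxa) (Ne.symm hxb)
      exact (Finset.eq_of_subset_of_card_le hss (by rw [h3, hc3])).symm
  have hpm : ∀ B : Finset (Fin v), B.card = 3 → h B = 1 ∨ h B = -1 := by
    intro B h3
    rcases hdecomp B h3 with hinj | ⟨i, x, hxi, rfl⟩
    · rw [htrans B h3 hinj]
      rcases Nat.even_or_odd ((B.filter (fun x => βFun v m x = true)).card) with hev | hod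
      · exact Or.inl hev.neg_one_pow
      · exact Or.inr hod.neg_one_pow
    · rw [hpairB i x hxi]
      exact epsFun_pm hn hm hSdist hSsub hSsts hMdist hMcover hc hd he (Ne.symm hxi)
  refine ⟨⟨hzero, ?_⟩, ?_, hpm⟩
  · -- pair balance
    intro P hP2
    obtain ⟨y, z, hyz, rfl⟩ := Finset.card_eq_two.mp hP2
    have hpair2 : ({y, z} : Finset (Fin v)).card = 2 := Finset.card_pair hyz
    have himg : Finset.univ.filter (fun B : Finset (Fin v) => B.card = 3 ∧ {y, z} ⊆ B)
        = (Finset.univ \ {y, z}).image (fun x => insert x {y, z}) := by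
      ext B
      simp only [Finset.mem_filter, Finset.mem_univ, true_and, Finset.mem_image,
        Finset.mem_sdiff, Finset.mem_insert, Finset.mem_singleton]
      constructor
      · rintro ⟨h3, hsub⟩
        have hsd : (B \ {y, z}).card = 1 := by
          rw [Finset.card_sdiff_of_subset hsub, h3, hpair2]
        obtain ⟨x, hx1⟩ := Finset.card_eq_one.mp hsd
        have hxmem : x ∈ B \ ({y, z} : Finset (Fin v)) := by
          rw [hx1]; exact Finset.mem_singleton_self x
        rw [Finset.mem_sdiff, Finset.mem_insert, Finset.mem_singleton] at hxmem
        obtain ⟨hxB, hxyz⟩ := hxmem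
        push_neg at hxyz
        refine ⟨x, by tauto, ?_⟩
        have hss : insert x {y, z} ⊆ B := Finset.insert_subset hxB hsub
        have hc3 : (insert x ({y, z} : Finset (Fin v))).card = 3 := by
          rw [Finset.card_insert_of_notMem (by simp [hxyz.1, hxyz.2]), hpair2]
        exact Finset.eq_of_subset_of_card_le hss (by rw [h3, hc3])
      · rintro ⟨x, hx, rfl⟩
        have hx' : x ≠ y ∧ x ≠ z := by tauto
        constructor
        · rw [Finset.card_insert_of_notMem (by simp [hx'.1, hx'.2]), hpair2]
        · exact Finset.subset_insert _ _
    have hinsinj : ∀ x1 ∈ Finset.univ \ ({y, z} : Finset (Fin v)),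
        ∀ x2 ∈ Finset.univ \ ({y, z} : Finset (Fin v)),
        insert x1 ({y, z} : Finset (Fin v)) = insert x2 ({y, z} : Finset (Fin v)) →
          x1 = x2 := by
      intro x1 hx1 x2 hx2 hins
      simp only [Finset.mem_sdiff, Finset.mem_univ, true_and, Finset.mem_insert,
        Finset.mem_singleton] at hx1 hx2
      push_neg at hx1 hx2
      have : x1 ∈ insert x2 ({y, z} : Finset (Fin v)) := by
        rw [← hins]; exact Finset.mem_insert_self x1 {y, z}
      simp only [Finset.mem_insert, Finset.mem_singleton] at this
      tauto
    have hpairsum : ∀ f : Fin v → ℤ,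
        ∑ x : Fin v, f x = ∑ k : Fin m, (f (a k) + f (b k)) := by
      intro f
      have huniv : (Finset.univ : Finset (Fin v)) =
          (Finset.univ.image a) ∪ (Finset.univ.image b) := by
        ext x
        simp only [Finset.mem_univ, true_iff, Finset.mem_union, Finset.mem_image]
        rcases hps.mem_pair (rfl : prFun v m hm0 x = _) with h1 | h1
        · exact Or.inl ⟨_, trivial, h1.symm⟩
        · exact Or.inr ⟨_, trivial, h1.symm⟩
      have hdisj : Disjoint (Finset.univ.image a) (Finset.univ.image b) := by
        rw [Finset.disjoint_left]
        rintro x hx1 hx2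
        obtain ⟨p, -, hp⟩ := Finset.mem_image.mp hx1
        obtain ⟨q, -, hq⟩ := Finset.mem_image.mp hx2
        exact hps.ab_ne p q (hp.trans hq.symm)
      rw [huniv, Finset.sum_union hdisj, Finset.sum_image (fun p _ q _ hpq => hps.ainj hpq),
        Finset.sum_image (fun p _ q _ hpq => hps.binj hpq), ← Finset.sum_add_distrib]
    have htotal : ∑ x : Fin v, h (insert x {y, z}) = 0 := by
      by_cases hcase : prFun v m hm0 y = prFun v m hm0 z
      · -- y, z in the same pair
        set i₀ := prFun v m hm0 y with hi₀
        have hyz2 : ({y, z} : Finset (Fin v)) = {a i₀, b i₀} := by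
          rcases hps.mem_pair hi₀.symm with hy1 | hy1 <;>
            rcases hps.mem_pair (hcase.symm.trans hi₀.symm) with hz1 | hz1
          · exact absurd (hy1.trans hz1.symm) hyz
          · rw [hy1, hz1]
          · rw [hy1, hz1, Finset.pair_comm]
          · exact absurd (hy1.trans hz1.symm) hyz
        rw [hpairsum]
        rw [show (0:ℤ) = ∑ k : Fin m, 2 * epsFun S M c d e i₀ k from by
          rw [← Finset.mul_sum, epsFun_rowsum]; ring]
        apply Finset.sum_congr rfl
        intro k _
        by_cases hk : k = i₀
        · subst hk
          have e1 : insert (a i₀) ({a i₀, b i₀} : Finset (Fin v)) = {a i₀, b i₀} :=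
            Finset.insert_eq_self.mpr (by simp)
          have e2 : insert (b i₀) ({a i₀, b i₀} : Finset (Fin v)) = {a i₀, b i₀} :=
            Finset.insert_eq_self.mpr (by simp)
          rw [hyz2, e1, e2,
            hzero ({a i₀, b i₀} : Finset (Fin v))
              (by rw [Finset.card_pair (hps.ab_ne i₀ i₀)]; omega), epsFun_diag]
          ring
        · have h1 : insert (a k) ({y, z} : Finset (Fin v)) = {a i₀, b i₀, a k} := by
            rw [hyz2]; ext w
            simp only [Finset.mem_insert, Finset.mem_singleton]; tauto
          have h2 : insert (b k) ({y, z} : Finset (Fin v)) = {a i₀, b i₀, b k} := by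
            rw [hyz2]; ext w
            simp only [Finset.mem_insert, Finset.mem_singleton]; tauto
          rw [h1, h2, hpairB _ (a k) (by rw [hps.pra]; exact hk),
            hpairB _ (b k) (by rw [hps.prb]; exact hk), hps.pra, hps.prb]
          ring
      · -- y, z in distinct pairs
        have keyGen : ∀ y' z' : Fin v, y' ≠ z' →
            prFun v m hm0 y' ≠ prFun v m hm0 z' →
            h (insert (a (prFun v m hm0 y')) {y', z'}) +
              h (insert (b (prFun v m hm0 y')) {y', z'}) =
            epsFun S M c d e (prFun v m hm0 y') (prFun v m hm0 z') := by
          intro y' z' hyz' hij'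
          set i := prFun v m hm0 y' with hi
          have hzi : prFun v m hm0 z' ≠ i := Ne.symm hij'
          have hcard2' : ({y', z'} : Finset (Fin v)).card = 2 := Finset.card_pair hyz'
          rcases hps.mem_pair hi.symm with h1 | h1
          · have e1 : insert (a i) ({y', z'} : Finset (Fin v)) = {y', z'} :=
              Finset.insert_eq_self.mpr (by rw [h1]; simp)
            have e2 : insert (b i) ({y', z'} : Finset (Fin v)) = {a i, b i, z'} := by
              rw [h1]; ext w
              simp only [Finset.mem_insert, Finset.mem_singleton]; tauto
            rw [e1, e2, hzero ({y', z'} : Finset (Fin v)) (by rw [hcard2']; omega),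
              hpairB i z' hzi]
            ring
          · have e1 : insert (b i) ({y', z'} : Finset (Fin v)) = {y', z'} :=
              Finset.insert_eq_self.mpr (by rw [h1]; simp)
            have e2 : insert (a i) ({y', z'} : Finset (Fin v)) = {a i, b i, z'} := by
              rw [h1]
            rw [e1, e2, hzero ({y', z'} : Finset (Fin v)) (by rw [hcard2']; omega),
              hpairB i z' hzi]
            ring
        have key0 : ∀ k : Fin m, k ≠ prFun v m hm0 y → k ≠ prFun v m hm0 z →
            h (insert (a k) {y, z}) + h (insert (b k) {y, z}) = 0 := by
          intro k hky hkz
          have hay : a k ≠ y := fun hh => hky (by rw [← hh, hps.pra])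
          have haz : a k ≠ z := fun hh => hkz (by rw [← hh, hps.pra])
          have hby : b k ≠ y := fun hh => hky (by rw [← hh, hps.prb])
          have hbz : b k ≠ z := fun hh => hkz (by rw [← hh, hps.prb])
          have hcA : (insert (a k) ({y, z} : Finset (Fin v))).card = 3 := by
            rw [Finset.card_insert_of_notMem (by simp [hay, haz]), hpair2]
          have hcB : (insert (b k) ({y, z} : Finset (Fin v))).card = 3 := by
            rw [Finset.card_insert_of_notMem (by simp [hby, hbz]), hpair2]
          have hinjA : Set.InjOn (prFun v m hm0) ↑(insert (a k) ({y, z} : Finset (Fin v))) := by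
            intro w1 hw1 w2 hw2 heq
            simp only [Finset.coe_insert, Set.mem_insert_iff, Finset.mem_coe,
              Finset.mem_insert, Finset.mem_singleton] at hw1 hw2
            rcases hw1 with rfl | rfl | rfl <;> rcases hw2 with rfl | rfl | rfl <;>
              first
                | rfl
                | (rw [hps.pra] at heq
                   first
                    | exact absurd heq hky
                    | exact absurd heq hkz
                    | exact absurd heq.symm hky
                    | exact absurd heq.symm hkz)
                | exact absurd heq hcase
                | exact absurd heq.symm hcase
          have hinjB : Set.InjOn (prFun v m hm0) ↑(insert (b k) ({y, z} : Finset (Fin v))) := by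
            intro w1 hw1 w2 hw2 heq
            simp only [Finset.coe_insert, Set.mem_insert_iff, Finset.mem_coe,
              Finset.mem_insert, Finset.mem_singleton] at hw1 hw2
            rcases hw1 with rfl | rfl | rfl <;> rcases hw2 with rfl | rfl | rfl <;>
              first
                | rfl
                | (rw [hps.prb] at heq
                   first
                    | exact absurd heq hky
                    | exact absurd heq hkz
                    | exact absurd heq.symm hky
                    | exact absurd heq.symm hkz)
                | exact absurd heq hcase
                | exact absurd heq.symm hcase
          rw [htrans _ hcA hinjA, htrans _ hcB hinjB]
          have hfA : Finset.filter (fun x => βFun v m x = true)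
              (insert (a k) ({y, z} : Finset (Fin v)))
              = Finset.filter (fun x => βFun v m x = true) {y, z} := by
            rw [Finset.filter_insert, if_neg (by rw [hps.βa]; simp)]
          have hfB : Finset.filter (fun x => βFun v m x = true)
              (insert (b k) ({y, z} : Finset (Fin v)))
              = insert (b k) (Finset.filter (fun x => βFun v m x = true) {y, z}) := by
            rw [Finset.filter_insert, if_pos (hps.βb k)]
          have hbnotin : b k ∉ Finset.filter (fun x => βFun v m x = true)
              ({y, z} : Finset (Fin v)) := by
            intro hh
            have := Finset.mem_of_mem_filter _ hh
            simp only [Finset.mem_insert, Finset.mem_singleton] at this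
            tauto
          rw [hfA, hfB, Finset.card_insert_of_notMem hbnotin, pow_succ]
          ring
        rw [hpairsum]
        rw [← Finset.sum_sdiff (Finset.subset_univ
          ({prFun v m hm0 y, prFun v m hm0 z} : Finset (Fin m)))]
        have hz1 : ∑ k ∈ Finset.univ \ ({prFun v m hm0 y, prFun v m hm0 z} : Finset (Fin m)),
            (h (insert (a k) {y, z}) + h (insert (b k) {y, z})) = 0 := by
          apply Finset.sum_eq_zero
          intro k hk
          simp only [Finset.mem_sdiff, Finset.mem_univ, true_and, Finset.mem_insert,
            Finset.mem_singleton] at hk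
          push_neg at hk
          exact key0 k hk.1 hk.2
        have hkeyj := keyGen z y (Ne.symm hyz) (Ne.symm hcase)
        rw [Finset.pair_comm z y] at hkeyj
        have hz2 : ∑ k ∈ ({prFun v m hm0 y, prFun v m hm0 z} : Finset (Fin m)),
            (h (insert (a k) {y, z}) + h (insert (b k) {y, z})) = 0 := by
          rw [Finset.sum_pair hcase, keyGen y z hyz hcase, hkeyj,
            epsFun_antisymm S M c d e (prFun v m hm0 y) (prFun v m hm0 z)]
          ring
        rw [hz1, hz2]
        ring
    rw [himg, Finset.sum_image hinsinj]
    have hB0 : ∑ x ∈ ({y, z} : Finset (Fin v)), h (insert x {y, z}) = 0 := by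
      rw [Finset.sum_pair hyz,
        Finset.insert_eq_self.mpr (by simp : y ∈ ({y, z} : Finset (Fin v))),
        Finset.insert_eq_self.mpr (by simp : z ∈ ({y, z} : Finset (Fin v))),
        hzero _ (by rw [hpair2]; omega)]
      ring
    have hsd := Finset.sum_sdiff (f := fun x => h (insert x {y, z}))
      (Finset.subset_univ ({y, z} : Finset (Fin v)))
    rw [htotal, hB0] at hsd
    simpa using hsd
  · intro B
    by_cases h3 : B.card = 3
    · rcases hpm B h3 with h1 | h1
      · right; right; exact h1
      · left; exact h1
    · right; left; exact hzero B h3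
end

section
/- For every integer v ≥ 6, a (2,3,v)-halving exists if and only if v ≡ 2 (mod 4). -/
open Finset

section Aux

variable {v : ℕ}

/-- The 3-sets containing a given pair are exactly `insert z P` for `z ∉ P`. -/
lemma filter_supset_eq_image (P : Finset (Fin v)) (hP : P.card = 2) :
    Finset.univ.filter (fun B : Finset (Fin v) => B.card = 3 ∧ P ⊆ B)
      = Pᶜ.image (fun z => insert z P) := by
  ext B
  simp only [mem_filter, mem_univ, true_and, mem_image, mem_compl]
  constructor
  · rintro ⟨h3, hsub⟩
    have hcard : (B \ P).card = 1 := by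
      rw [card_sdiff_of_subset hsub, h3, hP]
    obtain ⟨z, hz⟩ := card_eq_one.mp hcard
    have hzB : z ∈ B \ P := hz ▸ mem_singleton_self z
    refine ⟨z, (mem_sdiff.mp hzB).2, ?_⟩
    apply Finset.Subset.antisymm
    · intro w hw
      rcases mem_insert.mp hw with rfl | hwP
      · exact (mem_sdiff.mp hzB).1
      · exact hsub hwP
    · intro w hw
      by_cases hwP : w ∈ P
      · exact mem_insert_of_mem hwP
      · have hws : w ∈ B \ P := mem_sdiff.mpr ⟨hw, hwP⟩
        rw [hz] at hws
        simp only [mem_singleton] at hws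
        exact hws ▸ mem_insert_self w P
  · rintro ⟨z, hz, rfl⟩
    exact ⟨by rw [card_insert_of_notMem hz, hP], subset_insert z P⟩

lemma insert_injOn (P : Finset (Fin v)) :
    ∀ z ∈ Pᶜ, ∀ z' ∈ Pᶜ, insert z P = insert z' P → z = z' := by
  intro z hz z' hz' h
  have : z ∈ insert z' P := h ▸ mem_insert_self z P
  rcases mem_insert.mp this with h' | h'
  · exact h'
  · exact absurd h' (mem_compl.mp hz)

lemma pair_sum_eq (f : Finset (Fin v) → ℤ) (P : Finset (Fin v)) (hP : P.card = 2) :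
    ∑ B ∈ Finset.univ.filter (fun B : Finset (Fin v) => B.card = 3 ∧ P ⊆ B), f B
      = ∑ z ∈ Pᶜ, f (insert z P) := by
  rw [filter_supset_eq_image P hP, Finset.sum_image (insert_injOn P)]

end Aux

section Necessity

variable {v : ℕ}

lemma insert_comm3 (x y z : Fin v) : insert z ({x, y} : Finset (Fin v)) = insert y ({x, z} : Finset (Fin v)) := by
  ext w; simp only [mem_insert, mem_singleton]; tauto

/-- from a halving: for each pair, the positive count satisfies 2*c = v - 2. -/
lemma halving_pos_count (h : Finset (Fin v) → ℤ) (hh : isHalving v h)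
    (x y : Fin v) (hxy : x ≠ y) :
    2 * ((({x, y} : Finset (Fin v))ᶜ).filter
        (fun z => h (insert z {x, y}) = 1)).card = v - 2 := by
  have hP : ({x, y} : Finset (Fin v)).card = 2 := card_pair hxy
  have hsum : ∑ z ∈ ({x, y} : Finset (Fin v))ᶜ, h (insert z {x, y}) = 0 := by
    rw [← pair_sum_eq h _ hP]; exact hh.1.2 _ hP
  set S := ({x, y} : Finset (Fin v))ᶜ with hS
  set A := S.filter (fun z => h (insert z {x, y}) = 1) with hA
  have hScard : S.card = v - 2 := by
    rw [hS, card_compl, hP, Fintype.card_fin]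
  have hval : ∀ z ∈ S, h (insert z {x, y}) = 1 ∨ h (insert z {x, y}) = -1 := by
    intro z hz
    apply hh.2.2
    rw [card_insert_of_notMem (mem_compl.mp hz), hP]
  have hsplit : ∑ z ∈ A, h (insert z {x,y}) + ∑ z ∈ S.filter (fun z => ¬ (h (insert z {x,y}) = 1)), h (insert z {x,y}) = 0 := by
    rw [Finset.sum_filter_add_sum_filter_not]; exact hsum
  have h1 : ∑ z ∈ A, h (insert z {x,y}) = (A.card : ℤ) := by
    rw [Finset.sum_congr rfl (fun z hz => (mem_filter.mp hz).2), Finset.sum_const]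
    simp [hA]
  have h2 : ∑ z ∈ S.filter (fun z => ¬ (h (insert z {x,y}) = 1)), h (insert z {x,y})
      = -(((S.filter (fun z => ¬ (h (insert z {x,y}) = 1))).card : ℤ)) := by
    have hc : ∀ z ∈ S.filter (fun z => ¬ (h (insert z {x,y}) = 1)), h (insert z {x,y}) = -1 := by
      intro z hz
      have hz' := mem_filter.mp hz
      rcases hval z hz'.1 with h' | h'
      · exact absurd h' hz'.2
      · exact h'
    rw [Finset.sum_congr rfl hc, Finset.sum_const]
    simp
  have hcards : A.card + (S.filter (fun z => ¬ (h (insert z {x,y}) = 1))).card = S.card :=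
    Finset.card_filter_add_card_filter_not _
  rw [h1, h2] at hsplit
  omega

lemma halving_mod (h : Finset (Fin v) → ℤ) (hh : isHalving v h) (hv : 6 ≤ v) :
    v % 4 = 2 := by
  have hv0 : 0 < v := by omega
  set x : Fin v := ⟨0, hv0⟩ with hxdef
  set T : Finset (Fin v × Fin v) := univ.filter
    (fun q => q.1 ≠ x ∧ q.2 ≠ x ∧ q.1 ≠ q.2 ∧ h (insert q.2 {x, q.1}) = 1) with hT
  -- swap is an involution of T
  have hswap : ∀ q : Fin v × Fin v, q ∈ T → (q.2, q.1) ∈ T := by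
    intro q hq
    rw [hT, mem_filter] at hq ⊢
    obtain ⟨-, h1, h2, h3, h4⟩ := hq
    refine ⟨mem_univ _, h2, h1, h3.symm, ?_⟩
    show h (insert q.1 ({x, q.2} : Finset (Fin v))) = 1
    rw [← insert_comm3 x q.1 q.2]
    exact h4
  -- hence T has even cardinality
  have heven : Even T.card := by
    have hunion : T.filter (fun q => q.1 < q.2) ∪ T.filter (fun q => q.2 < q.1) = T := by
      rw [← Finset.filter_or]
      apply Finset.filter_true_of_mem
      intro q hq
      have hne : q.1 ≠ q.2 := ((mem_filter.mp hq).2).2.2.1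
      rcases lt_or_gt_of_ne hne with h' | h'
      · exact Or.inl h'
      · exact Or.inr h'
    have hdisj : Disjoint (T.filter (fun q => q.1 < q.2)) (T.filter (fun q => q.2 < q.1)) := by
      rw [Finset.disjoint_filter]
      intro q _ h1 h2
      exact absurd (lt_trans h1 h2) (lt_irrefl _)
    have hcardeq : (T.filter (fun q => q.1 < q.2)).card = (T.filter (fun q => q.2 < q.1)).card := by
      apply Finset.card_nbij' (fun q => (q.2, q.1)) (fun q => (q.2, q.1))
      · intro q hq
        have := mem_filter.mp hq
        exact mem_filter.mpr ⟨hswap q this.1, this.2⟩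
      · intro q hq
        have := mem_filter.mp hq
        exact mem_filter.mpr ⟨hswap q this.1, this.2⟩
      · intro q _; rfl
      · intro q _; rfl
    have hcardT : T.card = (T.filter (fun q => q.1 < q.2)).card + (T.filter (fun q => q.2 < q.1)).card := by
      rw [← Finset.card_union_of_disjoint hdisj, hunion]
    exact ⟨(T.filter (fun q => q.1 < q.2)).card, by omega⟩
  -- fiberwise count
  have hfib : T.card = ∑ y : Fin v, (T.filter (fun q => q.1 = y)).card :=
    Finset.card_eq_sum_card_fiberwise (fun q _ => mem_univ q.1)
  have hfibx : (T.filter (fun q => q.1 = x)).card = 0 := by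
    rw [Finset.card_eq_zero]
    ext q
    simp only [hT, Finset.filter_filter, mem_filter, mem_univ, true_and, Finset.notMem_empty,
      iff_false, not_and]
    tauto
  have hfiby : ∀ y : Fin v, y ≠ x →
      2 * (T.filter (fun q => q.1 = y)).card = v - 2 := by
    intro y hy
    have himg : T.filter (fun q => q.1 = y)
        = ((({x, y} : Finset (Fin v))ᶜ).filter
            (fun z => h (insert z {x, y}) = 1)).image (fun z => (y, z)) := by
      ext q
      simp only [hT, mem_filter, mem_univ, true_and, mem_image, mem_compl, mem_insert,
        mem_singleton]
      constructor
      · rintro ⟨⟨h1, h2, h3, h4⟩, rfl⟩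
        exact ⟨q.2, ⟨by tauto, h4⟩, rfl⟩
      · rintro ⟨z, ⟨hz1, hz2⟩, rfl⟩
        push_neg at hz1
        exact ⟨⟨hy, hz1.1, fun he => hz1.2 he.symm, hz2⟩, rfl⟩
    rw [himg, Finset.card_image_of_injective _ (by intro a b hab; exact (Prod.mk.injEq _ _ _ _).mp hab |>.2)]
    exact halving_pos_count h hh x y (fun he => hy he.symm)
  -- sum up
  have hsum2 : 2 * T.card = (v - 1) * (v - 2) := by
    rw [hfib, Finset.mul_sum]
    rw [← Finset.add_sum_erase _ _ (mem_univ x)]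
    rw [hfibx]
    have : ∀ y ∈ univ.erase x, 2 * (T.filter (fun q => q.1 = y)).card = v - 2 := by
      intro y hy
      exact hfiby y (Finset.mem_erase.mp hy).1
    rw [Finset.sum_congr rfl this, Finset.sum_const, Finset.card_erase_of_mem (mem_univ x)]
    simp [Finset.card_univ, smul_eq_mul]
  -- a fixed pair gives v even
  have hy0 : (⟨1, by omega⟩ : Fin v) ≠ x := by
    simp [hxdef, Fin.ext_iff]
  have hveven : v % 2 = 0 := by
    have := hfiby _ hy0
    omega
  -- conclude
  obtain ⟨w, hw⟩ := heven
  set a := (v - 2) / 2 with ha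
  have hva : v - 2 = 2 * a := by omega
  have hkey : 2 * (2 * w) = 2 * ((v - 1) * a) := by
    rw [hw] at hsum2
    calc 2 * (2 * w) = 2 * (w + w) := by ring
    _ = (v-1) * (v-2) := hsum2
    _ = (v-1) * (2 * a) := by rw [hva]
    _ = 2 * ((v-1)*a) := by ring
  have hkey2 : 2 * w = (v - 1) * a := by omega
  have hevena : Even ((v - 1) * a) := ⟨w, by omega⟩
  rcases Nat.even_mul.mp hevena with he | he
  · exfalso
    rw [Nat.even_iff] at he
    omega
  · rw [Nat.even_iff] at he
    omega

end Necessity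

section Construction

/-- cancel by a unit -/
lemma unit_mul_eq_iff {M : Type*} [CommMonoid M] {a : M} (ha : IsUnit a) (s w : M) :
    a * w = s ↔ w = ↑ha.unit⁻¹ * s := by
  have h1 : ((ha.unit⁻¹ : Mˣ) : M) * a = 1 := by
    nth_rewrite 2 [← ha.unit_spec]
    exact_mod_cast Units.inv_mul _
  constructor
  · rintro rfl
    calc w = (((ha.unit⁻¹ : Mˣ) : M) * a) * w := by rw [h1, one_mul]
    _ = ↑ha.unit⁻¹ * (a * w) := by rw [mul_assoc]
  · rintro rfl
    have h2 : a * (↑ha.unit⁻¹ * s) = (((ha.unit⁻¹ : Mˣ) : M) * a) * s := by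
      rw [← mul_assoc, mul_comm a]
    rw [h2, h1, one_mul]

variable (v m : ℕ)

/-- the label of a vertex -/
def lb (i : Fin v) : ZMod m := ((i.val / 2 : ℕ) : ZMod m)

/-- The halving function. -/
def hf : Finset (Fin v) → ℤ := fun B =>
  if B.card = 3 then
    (-1) ^ (∑ i ∈ B, i.val % 2) *
      (if ((∑ i ∈ B, i.val % 2) = 1 ∧
            (∑ i ∈ B, (i.val % 2) • lb v m i) = ∑ i ∈ B, (1 - i.val % 2) • lb v m i)
        ∨ ((∑ i ∈ B, i.val % 2) = 2 ∧
            (∑ i ∈ B, (i.val % 2) • lb v m i) = 4 * ∑ i ∈ B, (1 - i.val % 2) • lb v m i)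
      then -1 else 1)
  else 0

lemma hf_pm {B : Finset (Fin v)} (h3 : B.card = 3) : hf v m B = 1 ∨ hf v m B = -1 := by
  rw [hf, if_pos h3]
  rcases Nat.even_or_odd (∑ i ∈ B, i.val % 2) with he | ho
  · rw [he.neg_one_pow]
    split_ifs <;> norm_num
  · rw [ho.neg_one_pow]
    split_ifs <;> norm_num

lemma filter_parity_label [NeZero m] (hvm : v = 2 * m) (r : ℕ) (hr : r < 2) (t : ZMod m) :
    univ.filter (fun z : Fin v => z.val % 2 = r ∧ lb v m z = t)
      = {⟨2 * t.val + r, by have := ZMod.val_lt t; omega⟩} := by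
  ext z
  simp only [mem_filter, mem_univ, true_and, mem_singleton, Fin.ext_iff]
  constructor
  · rintro ⟨hp, hl⟩
    have hz2 : z.val / 2 < m := by have := z.isLt; omega
    have hval : (lb v m z).val = z.val / 2 := ZMod.val_cast_of_lt hz2
    rw [hl] at hval
    omega
  · intro hz
    have ht : t.val < m := ZMod.val_lt t
    constructor
    · omega
    · have hd : z.val / 2 = t.val := by omega
      rw [lb, hd]
      exact ZMod.natCast_rightInverse t

lemma card_parity [NeZero m] (hvm : v = 2 * m) (r : ℕ) (hr : r < 2) :
    (univ.filter (fun z : Fin v => z.val % 2 = r)).card = m := by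
  rw [Finset.card_eq_sum_card_fiberwise (f := lb v m) (t := univ) (fun z _ => mem_univ _)]
  have hs : ∀ t ∈ (univ : Finset (ZMod m)),
      ((univ.filter (fun z : Fin v => z.val % 2 = r)).filter (fun z => lb v m z = t)).card = 1 := by
    intro t _
    rw [Finset.filter_filter, filter_parity_label v m hvm r hr t, card_singleton]
  rw [Finset.sum_congr rfl hs, Finset.sum_const, smul_eq_mul, mul_one, Finset.card_univ, ZMod.card]

lemma sum_ind_s9 [NeZero m] (hvm : v = 2 * m) (r : ℕ) (hr : r < 2) (t : ZMod m) (c d : ℤ) :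
    ∑ z ∈ univ.filter (fun z : Fin v => z.val % 2 = r), (if lb v m z = t then c else d)
      = c + ((m : ℤ) - 1) * d := by
  rw [← Finset.sum_filter_add_sum_filter_not
    (univ.filter (fun z : Fin v => z.val % 2 = r)) (fun z => lb v m z = t)]
  have h1 : (univ.filter (fun z : Fin v => z.val % 2 = r)).filter (fun z => lb v m z = t)
      = {⟨2 * t.val + r, by have := ZMod.val_lt t; omega⟩} := by
    rw [Finset.filter_filter]; exact filter_parity_label v m hvm r hr t
  have hc1 : ((univ.filter (fun z : Fin v => z.val % 2 = r)).filter
      (fun z => lb v m z = t)).card = 1 := by rw [h1, card_singleton]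
  have hc2 : ((univ.filter (fun z : Fin v => z.val % 2 = r)).filter
      (fun z => ¬ lb v m z = t)).card = m - 1 := by
    have := Finset.card_filter_add_card_filter_not
      (s := univ.filter (fun z : Fin v => z.val % 2 = r)) (p := fun z => lb v m z = t)
    rw [hc1, card_parity v m hvm r hr] at this
    omega
  have e1 : ∑ z ∈ (univ.filter (fun z : Fin v => z.val % 2 = r)).filter
      (fun z => lb v m z = t), (if lb v m z = t then c else d) = c := by
    rw [Finset.sum_congr rfl (fun z hz => if_pos (mem_filter.mp hz).2), Finset.sum_const, hc1]
    simp
  have e2 : ∑ z ∈ (univ.filter (fun z : Fin v => z.val % 2 = r)).filter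
      (fun z => ¬ lb v m z = t), (if lb v m z = t then c else d)
      = ((m : ℤ) - 1) * d := by
    have hm1 : 1 ≤ m := Nat.one_le_iff_ne_zero.mpr (NeZero.ne m)
    rw [Finset.sum_congr rfl (fun z hz => if_neg (mem_filter.mp hz).2), Finset.sum_const, hc2,
      nsmul_eq_mul, Nat.cast_sub hm1]
    ring
  rw [e1, e2]

lemma hf_insert [NeZero m] (x y z : Fin v) (hxy : x ≠ y) (hzx : z ≠ x) (hzy : z ≠ y) :
    hf v m (insert z {x, y}) =
      (-1) ^ (z.val % 2 + (x.val % 2 + y.val % 2)) *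
        (if ((z.val % 2 + (x.val % 2 + y.val % 2)) = 1 ∧
              (z.val % 2) • lb v m z + ((x.val % 2) • lb v m x + (y.val % 2) • lb v m y)
                = (1 - z.val % 2) • lb v m z
                    + ((1 - x.val % 2) • lb v m x + (1 - y.val % 2) • lb v m y))
          ∨ ((z.val % 2 + (x.val % 2 + y.val % 2)) = 2 ∧
              (z.val % 2) • lb v m z + ((x.val % 2) • lb v m x + (y.val % 2) • lb v m y)
                = 4 * ((1 - z.val % 2) • lb v m z
                    + ((1 - x.val % 2) • lb v m x + (1 - y.val % 2) • lb v m y)))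
        then -1 else 1) := by
  have hz : z ∉ ({x, y} : Finset (Fin v)) := by simp [hzx, hzy]
  have hcard : (insert z ({x, y} : Finset (Fin v))).card = 3 := by
    rw [card_insert_of_notMem hz, card_pair hxy]
  rw [hf, if_pos hcard]
  simp only [Finset.sum_insert hz, Finset.sum_pair hxy]

lemma key_sum [NeZero m] (hmodd : Odd m) (hvm : v = 2 * m)
    (x y : Fin v) (hxy : x ≠ y) (hp : x.val % 2 ≤ y.val % 2) :
    ∑ z ∈ (({x, y} : Finset (Fin v))ᶜ), hf v m (insert z {x, y}) = 0 := by
  have hm1 : 1 ≤ m := Nat.one_le_iff_ne_zero.mpr (NeZero.ne m)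
  have hcop2 : Nat.Coprime 2 m := (Nat.prime_two.coprime_iff_not_dvd).mpr (by
    rw [Nat.odd_iff] at hmodd; omega)
  have hu2 : IsUnit (2 : ZMod m) := by
    have := (ZMod.isUnit_iff_coprime 2 m).mpr hcop2
    simpa using this
  have hu4 : IsUnit (4 : ZMod m) := by
    have h22 : (4 : ZMod m) = 2 * 2 := by norm_num
    rw [h22]; exact hu2.mul hu2
  have main : ∀ A B : Fin v → ℤ,
      (∀ z ∈ (({x, y} : Finset (Fin v))ᶜ),
        hf v m (insert z {x, y}) = if z.val % 2 = 1 then A z else B z) →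
      ∑ z ∈ (({x, y} : Finset (Fin v))ᶜ), hf v m (insert z {x, y})
        = ((∑ z ∈ univ.filter (fun z : Fin v => z.val % 2 = 1), A z)
            + ∑ z ∈ univ.filter (fun z : Fin v => z.val % 2 = 0), B z)
          - ((if x.val % 2 = 1 then A x else B x) + (if y.val % 2 = 1 then A y else B y)) := by
    intro A B hG
    rw [Finset.sum_congr rfl hG]
    have h0 := Finset.sum_compl_add_sum ({x, y} : Finset (Fin v))
      (fun z => if z.val % 2 = 1 then A z else B z)
    rw [Finset.sum_pair hxy] at h0
    have h1 : ∑ z : Fin v, (if z.val % 2 = 1 then A z else B z)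
        = ∑ z ∈ univ.filter (fun z : Fin v => z.val % 2 = 1), A z
          + ∑ z ∈ univ.filter (fun z : Fin v => z.val % 2 = 0), B z := by
      rw [← Finset.sum_filter_add_sum_filter_not univ (fun z : Fin v => z.val % 2 = 1)]
      congr 1
      · exact Finset.sum_congr rfl (fun z hz => if_pos (mem_filter.mp hz).2)
      · have hfeq : univ.filter (fun z : Fin v => ¬ z.val % 2 = 1)
            = univ.filter (fun z : Fin v => z.val % 2 = 0) := by
          apply Finset.filter_congr
          intro z _
          constructor <;> intro h' <;> omega
        rw [hfeq]
        exact Finset.sum_congr rfl (fun z hz => if_neg (by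
          have := (mem_filter.mp hz).2; omega))
    omega
  rcases Nat.mod_two_eq_zero_or_one x.val with hx2 | hx2 <;>
    rcases Nat.mod_two_eq_zero_or_one y.val with hy2 | hy2
  · -- x even, y even
    have hG : ∀ z ∈ (({x, y} : Finset (Fin v))ᶜ), hf v m (insert z {x, y})
        = if z.val % 2 = 1
            then (if lb v m z = lb v m x + lb v m y then (1:ℤ) else -1) else 1 := by
      intro z hz
      simp only [mem_compl, mem_insert, mem_singleton, not_or] at hz
      rw [hf_insert v m x y z hxy hz.1 hz.2]
      rcases Nat.mod_two_eq_zero_or_one z.val with hz2 | hz2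
      · simp [hz2, hx2, hy2]
      · by_cases hc : lb v m z = lb v m x + lb v m y <;>
          simp [hz2, hx2, hy2, hc]
    rw [main _ _ hG, sum_ind_s9 v m hvm 1 (by omega) (lb v m x + lb v m y) 1 (-1),
      Finset.sum_const, card_parity v m hvm 0 (by omega),
      if_neg (show ¬ x.val % 2 = 1 by omega), if_neg (show ¬ y.val % 2 = 1 by omega),
      nsmul_eq_mul]
    ring
  · -- x even, y odd
    have hG : ∀ z ∈ (({x, y} : Finset (Fin v))ᶜ), hf v m (insert z {x, y})
        = if z.val % 2 = 1
            then (if lb v m z = 4 * lb v m x - lb v m y then (-1:ℤ) else 1)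
            else (if lb v m z = lb v m y - lb v m x then (1:ℤ) else -1) := by
      intro z hz
      simp only [mem_compl, mem_insert, mem_singleton, not_or] at hz
      rw [hf_insert v m x y z hxy hz.1 hz.2]
      rcases Nat.mod_two_eq_zero_or_one z.val with hz2 | hz2
      · by_cases hc : lb v m z = lb v m y - lb v m x
        · have hcc : lb v m y = lb v m z + lb v m x := (eq_sub_iff_add_eq.mp hc).symm
          rw [if_neg (show ¬ (z.val % 2 = 1) by omega), if_pos hc]
          simp [hz2, hx2, hy2, hcc]
        · have hcc : ¬ (lb v m y = lb v m z + lb v m x) :=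
            fun h' => hc (eq_sub_iff_add_eq.mpr h'.symm)
          rw [if_neg (show ¬ (z.val % 2 = 1) by omega), if_neg hc]
          simp [hz2, hx2, hy2, hcc]
      · by_cases hc : lb v m z = 4 * lb v m x - lb v m y
        · have hcc : lb v m z + lb v m y = 4 * lb v m x := eq_sub_iff_add_eq.mp hc
          rw [if_pos hz2, if_pos hc]
          simp [hz2, hx2, hy2, hcc]
        · have hcc : ¬ (lb v m z + lb v m y = 4 * lb v m x) :=
            fun h' => hc (eq_sub_iff_add_eq.mpr h')
          rw [if_pos hz2, if_neg hc]
          simp [hz2, hx2, hy2, hcc]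
    rw [main _ _ hG, sum_ind_s9 v m hvm 1 (by omega) (4 * lb v m x - lb v m y) (-1) 1,
      sum_ind_s9 v m hvm 0 (by omega) (lb v m y - lb v m x) 1 (-1),
      if_neg (show ¬ x.val % 2 = 1 by omega), if_pos (show y.val % 2 = 1 by omega)]
    have hkey : (if lb v m x = lb v m y - lb v m x then (1:ℤ) else -1)
        + (if lb v m y = 4 * lb v m x - lb v m y then (-1:ℤ) else 1) = 0 := by
      by_cases hc : lb v m x = lb v m y - lb v m x
      · have hd : lb v m y = 4 * lb v m x - lb v m y := by
          linear_combination (-2 : ZMod m) * hc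
        rw [if_pos hc, if_pos hd]; ring
      · have hd : ¬ (lb v m y = 4 * lb v m x - lb v m y) := by
          intro h'
          apply hc
          have h2 : (2 : ZMod m) * lb v m y = 2 * (2 * lb v m x) := by
            linear_combination h'
          have h3 : lb v m y = 2 * lb v m x := hu2.mul_left_cancel h2
          linear_combination (-1 : ZMod m) * h3
        rw [if_neg hc, if_neg hd]; ring
    rw [hkey]
    ring
  · -- x odd, y even : impossible
    exact absurd hp (by omega)
  · -- x odd, y odd
    have hG : ∀ z ∈ (({x, y} : Finset (Fin v))ᶜ), hf v m (insert z {x, y})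
        = if z.val % 2 = 1 then (-1 : ℤ)
            else (if lb v m z = ↑hu4.unit⁻¹ * (lb v m x + lb v m y) then (-1:ℤ) else 1) := by
      intro z hz
      simp only [mem_compl, mem_insert, mem_singleton, not_or] at hz
      rw [hf_insert v m x y z hxy hz.1 hz.2]
      rcases Nat.mod_two_eq_zero_or_one z.val with hz2 | hz2
      · by_cases hc : lb v m z = ↑hu4.unit⁻¹ * (lb v m x + lb v m y)
        · have hcc : lb v m x + lb v m y = 4 * lb v m z :=
            ((unit_mul_eq_iff hu4 (lb v m x + lb v m y) (lb v m z)).mpr hc).symm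
          rw [if_neg (show ¬ (z.val % 2 = 1) by omega), if_pos hc]
          simp [hz2, hx2, hy2, hcc]
        · have hcc : ¬ (lb v m x + lb v m y = 4 * lb v m z) :=
            fun h' => hc ((unit_mul_eq_iff hu4 (lb v m x + lb v m y) (lb v m z)).mp h'.symm)
          rw [if_neg (show ¬ (z.val % 2 = 1) by omega), if_neg hc]
          simp [hz2, hx2, hy2, hcc]
      · simp [hz2, hx2, hy2]
    rw [main _ _ hG, Finset.sum_const, card_parity v m hvm 1 (by omega),
      sum_ind_s9 v m hvm 0 (by omega) (↑hu4.unit⁻¹ * (lb v m x + lb v m y)) (-1) 1,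
      if_pos (show x.val % 2 = 1 by omega), if_pos (show y.val % 2 = 1 by omega),
      nsmul_eq_mul]
    ring

end Construction

/-- For every `v ≥ 6`, a `(2,3,v)`-halving exists iff `v ≡ 2 (mod 4)`. -/
theorem halving_exists_iff (v : ℕ) (hv : 6 ≤ v) :
    (∃ h : Finset (Fin v) → ℤ, isHalving v h) ↔ v % 4 = 2 := by
  constructor
  · rintro ⟨h, hh⟩
    exact halving_mod h hh hv
  · intro hv4
    set m := v / 2 with hm
    have hvm : v = 2 * m := by omega
    have hmodd : Odd m := by rw [Nat.odd_iff]; omega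
    haveI : NeZero m := ⟨by omega⟩
    refine ⟨hf v m, ⟨⟨fun B hB => by rw [hf]; exact if_neg hB, ?_⟩, ?_,
      fun B hB => hf_pm v m hB⟩⟩
    · intro P hP
      rw [pair_sum_eq (hf v m) P hP]
      obtain ⟨x, y, hxy, rfl⟩ := Finset.card_eq_two.mp hP
      rcases le_or_gt (x.val % 2) (y.val % 2) with hpp | hpp
      · exact key_sum v m hmodd hvm x y hxy hpp
      · have hk := key_sum v m hmodd hvm y x (Ne.symm hxy) (by omega)
        rw [Finset.pair_comm x y]
        exact hk
    · intro B
      by_cases hB : B.card = 3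
      · rcases hf_pm v m hB with h1 | h1
        · right; right; exact h1
        · left; exact h1
      · right; left; rw [hf]; exact if_neg hB
end

section
/- Let v ≥ 6 and let a0, a1, a2, b0, b1, b2 be six pairwise distinct elements of Fin v. Then 𝒯 = (a0 a1 a2 ; b0 b1 b2) + (a0 a1 a2 ; b1 b2 b0) - (a0 a1 a2 ; b2 b0 b1) (a signed sum of three minimal trades) is a simple T(2,3,v) trade of volume 10, and its support is exactly the set of all twenty 3-element subsets of {a0, a1, a2, b0, b1, b2}. -/
namespace V10aux

def a6 : Fin 3 → Fin 6 := fun i => ⟨i.val, by omega⟩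
def b6 : Fin 3 → Fin 6 := fun i => ⟨i.val + 3, by omega⟩

def T0 : Finset (Fin 6) → ℤ := fun S =>
  minimalTrade 6 a6 b6 S + minimalTrade 6 a6 (fun k => b6 (k + 1)) S
    - minimalTrade 6 a6 (fun k => b6 (k + 2)) S

lemma img_comp {v : ℕ} (g : Fin 6 → Fin v) (A B : Fin 3 → Fin 6) (s : Fin 3 → Bool) :
    Finset.image (fun i => if s i then (g ∘ B) i else (g ∘ A) i) Finset.univ =
      (Finset.image (fun i => if s i then B i else A i) Finset.univ).image g := by
  rw [Finset.image_image]; congr 1; funext i; by_cases h : s i <;> simp [h]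

lemma mt_image {v : ℕ} (g : Fin 6 → Fin v) (hg : Function.Injective g)
    (A B : Fin 3 → Fin 6) (S : Finset (Fin 6)) :
    minimalTrade v (g ∘ A) (g ∘ B) (S.image g) = minimalTrade 6 A B S := by
  unfold minimalTrade
  refine Finset.sum_congr rfl fun s _ => ?_
  rw [img_comp]
  congr 1
  exact if_congr ⟨fun h => Finset.image_injective hg h, fun h => by rw [h]⟩ rfl rfl

lemma mt_zero {v : ℕ} (g : Fin 6 → Fin v)
    (A B : Fin 3 → Fin 6) (X : Finset (Fin v)) (hX : ∀ S : Finset (Fin 6), X ≠ S.image g) :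
    minimalTrade v (g ∘ A) (g ∘ B) X = 0 := by
  unfold minimalTrade
  refine Finset.sum_eq_zero fun s _ => ?_
  rw [img_comp, if_neg (hX _), mul_zero]

set_option maxRecDepth 100000 in
lemma d1 : ∀ S : Finset (Fin 6), T0 S = -1 ∨ T0 S = 0 ∨ T0 S = 1 := by decide
set_option maxRecDepth 100000 in
lemma d2 : ∀ S : Finset (Fin 6), T0 S ≠ 0 ↔ S.card = 3 := by decide
set_option maxRecDepth 100000 in
lemma d3 : ∀ Q : Finset (Fin 6), Q.card = 2 →
    ∑ S ∈ Finset.univ.filter (fun S => S.card = 3 ∧ Q ⊆ S), T0 S = 0 := by decide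
set_option maxRecDepth 100000 in
lemma d4 : ∑ S : Finset (Fin 6), max (T0 S) 0 = 10 := by decide

end V10aux

/-- For `v ≥ 6` and six pairwise distinct points `a₀,a₁,a₂,b₀,b₁,b₂`, the
signed sum `𝒯 = (a₀a₁a₂ ; b₀b₁b₂) + (a₀a₁a₂ ; b₁b₂b₀) - (a₀a₁a₂ ; b₂b₀b₁)` is a simple
`T(2,3,v)` trade of volume 10, with support exactly the twenty 3-subsets of
`{a₀,a₁,a₂,b₀,b₁,b₂}`. -/
theorem V10_trade (v : ℕ) (hv : 6 ≤ v) (a b : Fin 3 → Fin v)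
    (hab : Function.Injective (Sum.elim a b))
    (𝒯 : Finset (Fin v) → ℤ)
    (h𝒯 : 𝒯 = fun B => minimalTrade v a b B + minimalTrade v a (fun k => b (k + 1)) B
      - minimalTrade v a (fun k => b (k + 2)) B) :
    isTrade v 𝒯 ∧ isSimple v 𝒯 ∧ volume v 𝒯 = 10 ∧
      {B : Finset (Fin v) | 𝒯 B ≠ 0} =
        {B : Finset (Fin v) | B.card = 3 ∧ B ⊆ {a 0, a 1, a 2, b 0, b 1, b 2}} := by
  classical
  have haa : ∀ i j : Fin 3, a i = a j → i = j := fun i j h =>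
    Sum.inl_injective (hab (show Sum.elim a b (.inl i) = Sum.elim a b (.inl j) by simpa))
  have hbb : ∀ i j : Fin 3, b i = b j → i = j := fun i j h =>
    Sum.inr_injective (hab (show Sum.elim a b (.inr i) = Sum.elim a b (.inr j) by simpa))
  have hne : ∀ i j : Fin 3, a i ≠ b j := fun i j h => by
    have := hab (show Sum.elim a b (.inl i) = Sum.elim a b (.inr j) by simpa)
    simp at this
  set g : Fin 6 → Fin v :=
    fun i => if h : (i : ℕ) < 3 then a ⟨i, h⟩ else b ⟨(i : ℕ) - 3, by omega⟩ with hgdef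
  have hga : ∀ i : Fin 3, g (V10aux.a6 i) = a i := by
    intro i
    simp only [hgdef, V10aux.a6]
    rw [dif_pos i.isLt]
  have hgb : ∀ i : Fin 3, g (V10aux.b6 i) = b i := by
    intro i
    simp only [hgdef, V10aux.b6]
    rw [dif_neg (by omega)]
    exact congrArg b (Fin.ext (show ((i : ℕ) + 3 - 3 : ℕ) = (i : ℕ) by omega))
  have hginj : Function.Injective g := by
    intro x y hxy
    simp only [hgdef] at hxy
    by_cases hx : (x : ℕ) < 3 <;> by_cases hy : (y : ℕ) < 3
    · rw [dif_pos hx, dif_pos hy] at hxy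
      exact Fin.ext (by simpa using congrArg Fin.val (haa _ _ hxy))
    · rw [dif_pos hx, dif_neg hy] at hxy
      exact absurd hxy (hne _ _)
    · rw [dif_neg hx, dif_pos hy] at hxy
      exact absurd hxy.symm (hne _ _)
    · rw [dif_neg hx, dif_neg hy] at hxy
      have := congrArg Fin.val (hbb _ _ hxy)
      simp only at this
      exact Fin.ext (by omega)
  have ha : a = g ∘ V10aux.a6 := funext fun i => (hga i).symm
  have hb : b = g ∘ V10aux.b6 := funext fun i => (hgb i).symm
  have hTimg : ∀ S : Finset (Fin 6), 𝒯 (S.image g) = V10aux.T0 S := by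
    intro S
    rw [h𝒯]
    show minimalTrade v a b (S.image g) + minimalTrade v a (fun k => b (k + 1)) (S.image g)
        - minimalTrade v a (fun k => b (k + 2)) (S.image g) = V10aux.T0 S
    rw [ha, hb]
    show minimalTrade v (g ∘ V10aux.a6) (g ∘ V10aux.b6) (S.image g)
        + minimalTrade v (g ∘ V10aux.a6) (g ∘ fun k => V10aux.b6 (k + 1)) (S.image g)
        - minimalTrade v (g ∘ V10aux.a6) (g ∘ fun k => V10aux.b6 (k + 2)) (S.image g)
        = V10aux.T0 S
    rw [V10aux.mt_image g hginj, V10aux.mt_image g hginj, V10aux.mt_image g hginj]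
    try rfl
  have hTzero : ∀ X : Finset (Fin v), (∀ S : Finset (Fin 6), X ≠ S.image g) → 𝒯 X = 0 := by
    intro X hX
    rw [h𝒯]
    show minimalTrade v a b X + minimalTrade v a (fun k => b (k + 1)) X
        - minimalTrade v a (fun k => b (k + 2)) X = 0
    rw [ha, hb]
    show minimalTrade v (g ∘ V10aux.a6) (g ∘ V10aux.b6) X
        + minimalTrade v (g ∘ V10aux.a6) (g ∘ fun k => V10aux.b6 (k + 1)) X
        - minimalTrade v (g ∘ V10aux.a6) (g ∘ fun k => V10aux.b6 (k + 2)) X = 0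
    rw [V10aux.mt_zero g _ _ X hX, V10aux.mt_zero g _ _ X hX, V10aux.mt_zero g _ _ X hX]
    try ring
  clear h𝒯
  set R : Finset (Finset (Fin v)) :=
    Finset.univ.image (fun S : Finset (Fin 6) => S.image g) with hR
  have hmemR : ∀ X, X ∉ R → 𝒯 X = 0 := by
    intro X hX
    refine hTzero X fun S hS => hX ?_
    exact Finset.mem_image.mpr ⟨S, Finset.mem_univ S, hS.symm⟩
  have himg : (Finset.univ : Finset (Fin 6)).image g = {a 0, a 1, a 2, b 0, b 1, b 2} := by
    rw [show (Finset.univ : Finset (Fin 6)) = {0, 1, 2, 3, 4, 5} from rfl]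
    simp only [Finset.image_insert, Finset.image_singleton]
    rw [show g 0 = a 0 from hga 0, show g 1 = a 1 from hga 1, show g 2 = a 2 from hga 2,
        show g 3 = b 0 from hgb 0, show g 4 = b 1 from hgb 1, show g 5 = b 2 from hgb 2]
  have hrep : ∀ B : Finset (Fin v), 𝒯 B ≠ 0 → ∃ S : Finset (Fin 6), B = S.image g := by
    intro B hB0
    by_contra hx
    push_neg at hx
    exact hB0 (hTzero B hx)
  refine ⟨⟨?_, ?_⟩, ?_, ?_, ?_⟩
  · -- vanishing off card-3 sets
    intro B hB
    by_contra hB0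
    obtain ⟨S, rfl⟩ := hrep B hB0
    rw [hTimg S] at hB0
    have h3 := (V10aux.d2 S).mp hB0
    rw [Finset.card_image_of_injective S hginj, h3] at hB
    exact hB rfl
  · -- pair balance
    intro P hP
    have hsub : Finset.filter (fun B : Finset (Fin v) => B.card = 3 ∧ P ⊆ B) R ⊆
        Finset.filter (fun B : Finset (Fin v) => B.card = 3 ∧ P ⊆ B) Finset.univ :=
      Finset.filter_subset_filter _ (Finset.subset_univ R)
    rw [← Finset.sum_subset hsub (fun B hB hBR => hmemR B fun hBin =>
      hBR (Finset.mem_filter.mpr ⟨hBin, (Finset.mem_filter.mp hB).2⟩))]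
    rw [hR, Finset.filter_image,
      Finset.sum_image (fun x _ y _ h => Finset.image_injective hginj h)]
    rw [Finset.sum_congr rfl (fun (S : Finset (Fin 6)) _ => hTimg S)]
    by_cases hPQ : ∃ Q : Finset (Fin 6), P = Q.image g
    · obtain ⟨Q, rfl⟩ := hPQ
      have hQ2 : Q.card = 2 := by
        rw [← Finset.card_image_of_injective Q hginj]; exact hP
      have hd3 := V10aux.d3 Q hQ2
      rw [← hd3]
      apply Finset.sum_congr _ (fun _ _ => rfl)
      apply Finset.filter_congr
      intro S _
      simp only [Finset.card_image_of_injective S hginj,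
        Finset.image_subset_image_iff hginj]
    · refine Finset.sum_eq_zero fun S hS => ?_
      exfalso
      have hPs : P ⊆ S.image g := ((Finset.mem_filter.mp hS).2).2
      obtain ⟨Q, _, hQ⟩ := Finset.subset_image_iff.mp hPs
      exact hPQ ⟨Q, hQ.symm⟩
  · -- simple
    intro B
    by_cases hB : ∃ S : Finset (Fin 6), B = S.image g
    · obtain ⟨S, rfl⟩ := hB
      rw [hTimg S]
      exact V10aux.d1 S
    · push_neg at hB
      exact Or.inr (Or.inl (hTzero B hB))
  · -- volume
    show (∑ B : Finset (Fin v), max (𝒯 B) 0) = 10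
    rw [← Finset.sum_subset (Finset.subset_univ R)
      (fun B _ hBR => by rw [hmemR B hBR]; exact max_self 0)]
    rw [hR, Finset.sum_image (fun x _ y _ h => Finset.image_injective hginj h)]
    rw [Finset.sum_congr rfl (fun (S : Finset (Fin 6)) _ => by rw [hTimg S])]
    exact V10aux.d4
  · -- support
    ext B
    simp only [Set.mem_setOf_eq]
    constructor
    · intro hB0
      obtain ⟨S, rfl⟩ := hrep B hB0
      rw [hTimg S] at hB0
      have h3 := (V10aux.d2 S).mp hB0
      refine ⟨by rw [Finset.card_image_of_injective S hginj]; exact h3, ?_⟩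
      rw [← himg]
      exact Finset.image_subset_image (Finset.subset_univ S)
    · rintro ⟨hB3, hBsub⟩
      rw [← himg] at hBsub
      obtain ⟨Q, _, rfl⟩ := Finset.subset_image_iff.mp hBsub
      rw [hTimg Q]
      refine (V10aux.d2 Q).mpr ?_
      rw [← Finset.card_image_of_injective Q hginj]
      exact hB3
end
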